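/- arXiv:1506.03883 — 5 statements merged into one kernel-verified Lean document; each statement's English description precedes it below -/
import Mathlib

section
/- A finite game graph G yields static hierarchical information with respect to a total order ⪯ on the players if, and only if, for every pair of players with i ⪯ j there exists a Moore machine with input alphabet B^i and output alphabet B^j which, on input β^i(π), outputs β^j(π), for every history π of G. -/
/-- A finite game graph for `n` players: positions `V` with initial position `init`,
action sets `A i`, observation sets `B i`, a move relation labelled by action
profiles (with no dead ends), and observation functions. -/
structure GameGraph (n : ℕ) (V : Type) (A : Fin n → Type) (B : Fin n → Type) where
  init : V
  move : V → (∀ i, A i) → V → Prop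
  noDeadEnd : ∀ v a, ∃ w, move v a w
  obs : ∀ i : Fin n, V → B i

/-- A Moore machine with finite state set `Q`, input alphabet `σ`, output alphabet `γ`. -/
structure Moore (σ γ : Type) where
  Q : Type
  finQ : Fintype Q
  q0 : Q
  δ : Q → σ → Q
  out : Q → γ

namespace Moore

/-- The output letter of a Moore machine after reading a word. -/
def output {σ γ : Type} (mc : Moore σ γ) (w : List σ) : γ :=
  mc.out (w.foldl mc.δ mc.q0)

/-- The output word of a Moore machine along a word: the `k`-th letter is the
output after reading the prefix of length `k+1`. -/
def outWord {σ γ : Type} (mc : Moore σ γ) (w : List σ) : List γ :=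
  ((w.scanl mc.δ mc.q0).drop 1).map mc.out

end Moore

/-- A deterministic parity automaton over alphabet `α`. -/
structure ParityAut (α : Type) where
  Q : Type
  finQ : Fintype Q
  q0 : Q
  δ : Q → α → Q
  prio : Q → ℕ

namespace ParityAut

/-- The run of a deterministic parity automaton on an infinite word. -/
def run {α : Type} (d : ParityAut α) (f : ℕ → α) : ℕ → d.Q
  | 0 => d.q0
  | t + 1 => d.δ (run d f t) (f t)

/-- Parity acceptance: the least priority occurring infinitely often is even. -/
def Accepts {α : Type} (d : ParityAut α) (f : ℕ → α) : Prop :=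
  Even (sInf { p | ∃ᶠ t in Filter.atTop, d.prio (d.run f t) = p })

end ParityAut

/-- A deterministic Büchi automaton over alphabet `α` with state set `σ`. -/
structure DetBuchi (α σ : Type) where
  q0 : σ
  δ : σ → α → σ
  accept : Set σ

namespace DetBuchi

/-- The run of a deterministic Büchi automaton on an infinite word. -/
def run {α σ : Type} (d : DetBuchi α σ) (f : ℕ → α) : ℕ → σ
  | 0 => d.q0
  | t + 1 => d.δ (run d f t) (f t)

/-- Büchi acceptance: the run visits accepting states infinitely often. -/
def Accepts {α σ : Type} (d : DetBuchi α σ) (f : ℕ → α) : Prop :=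
  ∃ᶠ t in Filter.atTop, d.run f t ∈ d.accept

end DetBuchi

namespace GameGraph

variable {n : ℕ} {V : Type} {A B : Fin n → Type}

/-- Two positions are linked by a move (for some action profile). -/
def step (G : GameGraph n V A B) (u w : V) : Prop := ∃ a, G.move u a w

/-- A history: a nonempty sequence starting at the initial position, each
consecutive pair lying on a move. -/
def IsHistory (G : GameGraph n V A B) (π : List V) : Prop :=
  π.head? = some G.init ∧ π.Chain' G.step

/-- The observation sequence of player `i` along a history (the observation at
the initial position is discarded). -/
def obsSeq (G : GameGraph n V A B) (i : Fin n) (π : List V) : List (B i) :=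
  (π.drop 1).map (G.obs i)

/-- Histories are indistinguishable for player `i` if they yield the same observations. -/
def Indist (G : GameGraph n V A B) (i : Fin n) (π π' : List V) : Prop :=
  G.obsSeq i π = G.obsSeq i π'

/-- The information set of player `i` at history `π`. -/
def InfoSet (G : GameGraph n V A B) (i : Fin n) (π : List V) : Set (List V) :=
  { π' | G.IsHistory π' ∧ G.Indist i π π' }

/-- A history yields hierarchical information if the information sets of players
are totally ordered by inclusion. -/
def HistHI (G : GameGraph n V A B) (π : List V) : Prop :=
  ∀ i j : Fin n, G.InfoSet i π ⊆ G.InfoSet j π ∨ G.InfoSet j π ⊆ G.InfoSet i π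

/-- Static hierarchical information: there is a total order of the players such
that along every history, the information sets respect this order. -/
def StaticHI (G : GameGraph n V A B) : Prop :=
  ∃ ord : Fin n → Fin n → Prop, IsLinearOrder (Fin n) ord ∧
    ∀ i j : Fin n, ord i j → ∀ π, G.IsHistory π → G.InfoSet i π ⊆ G.InfoSet j π

/-- Hierarchical observation: there is a total order of the players such that
the observation of a smaller player determines that of a bigger player, positionally. -/
def HierObs (G : GameGraph n V A B) : Prop :=
  ∃ ord : Fin n → Fin n → Prop, IsLinearOrder (Fin n) ord ∧
    ∀ i j : Fin n, ord i j → ∀ v v' : V, G.obs i v = G.obs i v' → G.obs j v = G.obs j v'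

/-- Dynamic hierarchical information: every history yields hierarchical information. -/
def DynamicHI (G : GameGraph n V A B) : Prop := ∀ π, G.IsHistory π → G.HistHI π

/-- The prefix `v₀ … v_t` of a play, as a list. -/
def playPrefix (f : ℕ → V) (t : ℕ) : List V := (List.range (t + 1)).map f

/-- A play: an infinite sequence all of whose prefixes are histories. -/
def IsPlay (G : GameGraph n V A B) (f : ℕ → V) : Prop :=
  ∀ t, G.IsHistory (playPrefix f t)

/-- A play yields recurring hierarchical information if infinitely many of its
prefix histories yield hierarchical information. -/
def PlayRecurringHI (G : GameGraph n V A B) (f : ℕ → V) : Prop :=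
  ∀ T, ∃ t, T ≤ t ∧ G.HistHI (playPrefix f t)

/-- A game yields recurring hierarchical information if every play does. -/
def RecurringHI (G : GameGraph n V A B) : Prop :=
  ∀ f, G.IsPlay f → G.PlayRecurringHI f

/-- `[t, t+ℓ]` is a gap of the play `f`: no prefix of length `r ∈ [t, t+ℓ]` yields
hierarchical information.  The length of this gap is `ℓ + 1`. -/
def IsGap (G : GameGraph n V A B) (f : ℕ → V) (t ℓ : ℕ) : Prop :=
  ∀ r, t ≤ r → r ≤ t + ℓ → ¬ G.HistHI (playPrefix f r)

/-- Information-consistency of a strategy profile: each component is constant on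
indistinguishability classes of histories. -/
def Consistent (G : GameGraph n V A B) (s : ∀ i, List V → A i) : Prop :=
  ∀ (i : Fin n) (π π' : List V),
    G.IsHistory π → G.IsHistory π' → G.Indist i π π' → s i π = s i π'

/-- A play follows a strategy profile. -/
def Follows (G : GameGraph n V A B) (s : ∀ i, List V → A i) (f : ℕ → V) : Prop :=
  f 0 = G.init ∧ ∀ t, ∃ a, G.move (f t) a (f (t + 1)) ∧ ∀ i, a i = s i (playPrefix f t)

/-- A distributed winning strategy for winning condition `W`: an information-consistent
profile all of whose outcomes lie in `W`. -/
def WinningProfile (G : GameGraph n V A B) (W : Set (ℕ → V)) (s : ∀ i, List V → A i) : Prop :=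
  G.Consistent s ∧ ∀ f, G.Follows s f → f ∈ W

/-- A finite-state strategy for player `i`: implemented by a Moore machine reading
the observation sequence of the history. -/
def FinStateStrategy (G : GameGraph n V A B) (i : Fin n) (si : List V → A i) : Prop :=
  ∃ mc : Moore (B i) (A i), ∀ π, G.IsHistory π → si π = mc.output (G.obsSeq i π)

/-- The game admits a distributed winning strategy for `W`. -/
def HasDWS (G : GameGraph n V A B) (W : Set (ℕ → V)) : Prop :=
  ∃ s : ∀ i, List V → A i, G.WinningProfile W s

/-- The game admits a finite-state distributed winning strategy for `W`. -/
def HasFinDWS (G : GameGraph n V A B) (W : Set (ℕ → V)) : Prop :=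
  ∃ s : ∀ i, List V → A i, G.WinningProfile W s ∧ ∀ i, G.FinStateStrategy i (s i)

/-- `i ⪯_π j` : at history `π`, player `i` is at least as informed as player `j`. -/
def infoLE (G : GameGraph n V A B) (π : List V) (i j : Fin n) : Prop :=
  G.InfoSet i π ⊆ G.InfoSet j π

/-- The information rank of player `i` at history `π`: the number of players `j`
with `j ≺_π i`, or with `j < i` and `j ≈_π i`. -/
noncomputable def rank (G : GameGraph n V A B) (i : Fin n) (π : List V) : ℕ :=
  Nat.card {j : Fin n //
    (G.infoLE π j i ∧ ¬ G.infoLE π i j) ∨ (j < i ∧ G.infoLE π j i ∧ G.infoLE π i j)}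

/-- The signal `λ_j^i`: the set of observations of player `i` at the last positions of
histories in the information set of player `j`. -/
def lam (G : GameGraph n V A B) (i j : Fin n) (π : List V) : Set (B i) :=
  { b | ∃ π', π' ∈ G.InfoSet j π ∧ ∃ v, π'.getLast? = some v ∧ G.obs i v = b }

/-- Players `i` and `j` cross at stage `ℓ` of the play `f`. -/
def Crossing (G : GameGraph n V A B) (f : ℕ → V) (ℓ : ℕ) (i j : Fin n) : Prop :=
  G.InfoSet i (playPrefix f ℓ) ⊂ G.InfoSet j (playPrefix f ℓ) ∧
  G.InfoSet j (playPrefix f (ℓ + 1)) ⊂ G.InfoSet i (playPrefix f (ℓ + 1))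

/-- A game is cross-free if no two players cross at any stage of any play. -/
def CrossFree (G : GameGraph n V A B) : Prop :=
  ∀ f, G.IsPlay f → ∀ (ℓ : ℕ) (i j : Fin n), ¬ G.Crossing f ℓ i j

end GameGraph


section StaticHIAux

open Classical List

theorem scanl_concat' {α β : Type} (f : β → α → β) (b : β) (l : List α) (a : α) :
    List.scanl f b (l ++ [a]) = List.scanl f b l ++ [List.foldl f b (l ++ [a])] := by
  induction l generalizing b with
  | nil => simp [List.scanl_cons]
  | cons x xs ih => simp [List.scanl_cons, ih, List.foldl_cons]

theorem Moore.outWord_concat {σ γ : Type} (mc : Moore σ γ) (w : List σ) (b : σ) :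
    mc.outWord (w ++ [b]) = mc.outWord w ++ [mc.output (w ++ [b])] := by
  unfold Moore.outWord Moore.output
  rw [scanl_concat', List.drop_append_of_le_length (by simp [List.length_scanl])]
  simp

namespace GameGraph

variable {n : ℕ} {V : Type} {A B : Fin n → Type}

theorem obsSeq_concat (G : GameGraph n V A B) (i : Fin n) (π : List V) (hπ : π ≠ [])
    (v : V) : G.obsSeq i (π ++ [v]) = G.obsSeq i π ++ [G.obs i v] := by
  unfold GameGraph.obsSeq
  rw [List.drop_append_of_le_length (by cases π <;> simp_all), List.map_append]
  simp

theorem isHistory_concat (G : GameGraph n V A B) (π : List V) (hπ : π ≠ []) (v : V) :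
    G.IsHistory (π ++ [v]) ↔ G.IsHistory π ∧ ∀ u ∈ π.getLast?, G.step u v := by
  unfold GameGraph.IsHistory
  simp only [List.Chain']
  rw [List.isChain_append]
  constructor
  · rintro ⟨h1, h2, _, h3⟩
    rw [List.head?_append_of_ne_nil _ hπ] at h1
    exact ⟨⟨h1, h2⟩, fun u hu => h3 u hu v rfl⟩
  · rintro ⟨⟨h1, h2⟩, h3⟩
    exact ⟨by rw [List.head?_append_of_ne_nil _ hπ]; exact h1, h2, by simp,
      fun u hu w hw => by simp at hw; subst hw; exact h3 u hu⟩

theorem history_ne_nil (G : GameGraph n V A B) {π : List V} (h : G.IsHistory π) :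
    π ≠ [] := by
  intro hn; subst hn; simp [GameGraph.IsHistory] at h

/-- The last positions of histories indistinguishable for player `i` from an
`i`-observation word `w`. -/
noncomputable def lastSet (G : GameGraph n V A B) [Fintype V] (i : Fin n)
    (w : List (B i)) : Finset V :=
  Finset.univ.filter (fun v => ∃ π', G.IsHistory π' ∧ G.obsSeq i π' = w ∧
    π'.getLast? = some v)

/-- The Moore machine tracking the last positions compatible with an observation word. -/
noncomputable def hierMoore (G : GameGraph n V A B) [Fintype V] (i j : Fin n) :
    Moore (B i) (B j) where
  Q := Finset V
  finQ := inferInstance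
  q0 := {G.init}
  δ := fun S b => Finset.univ.filter (fun w => (∃ v ∈ S, G.step v w) ∧ G.obs i w = b)
  out := fun S => if h : S.Nonempty then G.obs j h.choose else G.obs j G.init

theorem obsSeq_nil_iff (G : GameGraph n V A B) (i : Fin n) {π : List V}
    (h : G.IsHistory π) : G.obsSeq i π = [] ↔ π = [G.init] := by
  constructor
  · intro he
    have hlen : π.length ≤ 1 := by
      have := congrArg List.length he
      simp [GameGraph.obsSeq] at this
      omega
    match π, G.history_ne_nil h, hlen with
    | [x], _, _ =>
      obtain ⟨h1, _⟩ := h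
      simp at h1
      rw [h1]
    | x :: y :: l, _, hlen => simp at hlen
  · rintro rfl; rfl

theorem lastSet_invariant (G : GameGraph n V A B) [Fintype V] (i j : Fin n) :
    ∀ π : List V, G.IsHistory π →
      (G.obsSeq i π).foldl (G.hierMoore i j).δ (G.hierMoore i j).q0 = G.lastSet i (G.obsSeq i π) := by
  intro π
  induction π using List.reverseRecOn with
  | nil => intro h; exact absurd rfl (G.history_ne_nil h)
  | append_singleton π v ih =>
    intro h
    rcases eq_or_ne π [] with rfl | hne
    · -- π ++ [v] = [v]; history means v = init
      have h1 := h.1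
      simp at h1
      subst h1
      show ({G.init} : Finset V) = _
      refine Finset.ext fun u => ?_
      simp only [lastSet, Finset.mem_filter, Finset.mem_univ, true_and, Finset.mem_singleton]
      constructor
      · rintro rfl
        exact ⟨[G.init], ⟨rfl, List.isChain_singleton _⟩, rfl, rfl⟩
      · rintro ⟨π', hπ', he, hl⟩
        have he' : π' = [G.init] := (G.obsSeq_nil_iff i hπ').1 (by simpa [GameGraph.obsSeq] using he)
        subst he'
        simp at hl
        exact hl.symm
    · obtain ⟨hH, hstep⟩ := (G.isHistory_concat π hne v).1 h
      have hstep' : G.step (π.getLast hne) v := hstep _ (List.getLast?_eq_getLast hne ▸ rfl)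
      rw [G.obsSeq_concat i π hne v, List.foldl_append, ih hH]
      refine Finset.ext fun u => ?_
      simp only [hierMoore, Finset.mem_filter, Finset.mem_univ, true_and, List.foldl_cons,
        List.foldl_nil, lastSet]
      constructor
      · rintro ⟨⟨x, hx, hxu⟩, hobs⟩
        obtain ⟨τ, hτ, hτo, hτl⟩ := hx
        refine ⟨τ ++ [u], ?_, ?_, by simp⟩
        · exact (G.isHistory_concat τ (G.history_ne_nil hτ) u).2
            ⟨hτ, fun z hz => by rw [hτl] at hz; simp at hz; subst hz; exact hxu⟩
        · rw [G.obsSeq_concat i τ (G.history_ne_nil hτ) u, hτo, hobs]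
      · rintro ⟨π', hπ', hπ'o, hπ'l⟩
        have hπ'ne := G.history_ne_nil hπ'
        have hdecomp : π'.dropLast ++ [u] = π' := List.dropLast_append_getLast? u hπ'l
        have hdne : π'.dropLast ≠ [] := by
          intro hd
          have hx : π' = [u] := by rw [← hdecomp, hd]; rfl
          rw [hx] at hπ'o
          have h0 : ([] : List (B i)) = G.obsSeq i π ++ [G.obs i v] := hπ'o
          simp at h0
        rw [← hdecomp] at hπ'
        obtain ⟨hτ, hs⟩ := (G.isHistory_concat _ hdne u).1 hπ'
        rw [← hdecomp, G.obsSeq_concat i _ hdne u] at hπ'o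
        have hinj := List.append_inj' hπ'o rfl
        have ho1 := hinj.1
        have ho2 : G.obs i u = G.obs i v := by simpa using hinj.2
        refine ⟨⟨π'.dropLast.getLast hdne, ⟨π'.dropLast, hτ, ho1, List.getLast?_eq_getLast hdne⟩,
          hs _ (List.getLast?_eq_getLast hdne ▸ rfl)⟩, ho2⟩

theorem lastSet_out (G : GameGraph n V A B) [Fintype V] (i j : Fin n)
    (hinc : ∀ π, G.IsHistory π → G.InfoSet i π ⊆ G.InfoSet j π)
    (π : List V) (hne : π ≠ []) (v : V) (h : G.IsHistory (π ++ [v])) :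
    (G.hierMoore i j).out (G.lastSet i (G.obsSeq i (π ++ [v]))) = G.obs j v := by
  have hmem : v ∈ G.lastSet i (G.obsSeq i (π ++ [v])) := by
    simp only [lastSet, Finset.mem_filter, Finset.mem_univ, true_and]
    exact ⟨π ++ [v], h, rfl, by simp⟩
  have hNE : (G.lastSet i (G.obsSeq i (π ++ [v]))).Nonempty := ⟨v, hmem⟩
  show (if h' : _ then _ else _) = _
  rw [dif_pos hNE]
  -- the chosen element
  have hch := hNE.choose_spec
  simp only [lastSet, Finset.mem_filter, Finset.mem_univ, true_and] at hch
  obtain ⟨π', hπ', hπ'o, hπ'l⟩ := hch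
  -- π' is in InfoSet i (π ++ [v]), hence in InfoSet j
  have hinfo : π' ∈ G.InfoSet j (π ++ [v]) :=
    hinc (π ++ [v]) h ⟨hπ', hπ'o.symm⟩
  have hjo : G.obsSeq j (π ++ [v]) = G.obsSeq j π' := hinfo.2
  -- decompose π'
  have hdecomp : π'.dropLast ++ [hNE.choose] = π' := List.dropLast_append_getLast? _ hπ'l
  have hdne : π'.dropLast ≠ [] := by
    intro hd
    have hx : π' = [hNE.choose] := by rw [← hdecomp, hd]; rfl
    rw [hx] at hπ'o
    have h0 : ([] : List (B i)) = G.obsSeq i (π ++ [v]) := hπ'o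
    rw [G.obsSeq_concat i π hne v] at h0
    simp at h0
  rw [← hdecomp, G.obsSeq_concat j _ hdne, G.obsSeq_concat j π hne v] at hjo
  have hinj := List.append_inj' hjo rfl
  have h2 : G.obs j v = G.obs j hNE.choose := by simpa using hinj.2
  exact h2.symm

theorem hierMoore_correct (G : GameGraph n V A B) [Fintype V] (i j : Fin n)
    (hinc : ∀ π, G.IsHistory π → G.InfoSet i π ⊆ G.InfoSet j π) :
    ∀ π, G.IsHistory π → (G.hierMoore i j).outWord (G.obsSeq i π) = G.obsSeq j π := by
  intro π
  induction π using List.reverseRecOn with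
  | nil => intro h; exact absurd rfl (G.history_ne_nil h)
  | append_singleton π v ih =>
    intro h
    rcases eq_or_ne π [] with rfl | hne
    · rfl
    · obtain ⟨hH, _⟩ := (G.isHistory_concat π hne v).1 h
      rw [G.obsSeq_concat i π hne v, Moore.outWord_concat, ih hH,
        ← G.obsSeq_concat i π hne v, G.obsSeq_concat j π hne v]
      congr 1
      show [(G.hierMoore i j).out _] = _
      rw [G.lastSet_invariant i j _ h, G.lastSet_out i j hinc π hne v h]

end GameGraph

end StaticHIAux

/-- A finite game graph `G` yields static hierarchical information with
respect to a total order `ord` on the players iff for every pair of players with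
`ord i j` there is a Moore machine with input alphabet `B i` and output alphabet `B j`
which, on input `β^i(π)`, outputs `β^j(π)`, for every history `π` of `G`. -/
theorem statement0 {n : ℕ} {V : Type} {A B : Fin n → Type}
    [Fintype V] [∀ i, Fintype (A i)] [∀ i, Fintype (B i)]
    (G : GameGraph n V A B) (ord : Fin n → Fin n → Prop)
    (hord : IsLinearOrder (Fin n) ord) :
    (∀ i j : Fin n, ord i j → ∀ π, G.IsHistory π → G.InfoSet i π ⊆ G.InfoSet j π) ↔
      (∀ i j : Fin n, ord i j → ∃ mc : Moore (B i) (B j),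
        ∀ π, G.IsHistory π → mc.outWord (G.obsSeq i π) = G.obsSeq j π) := by
  constructor
  · intro h i j hij
    exact ⟨G.hierMoore i j, G.hierMoore_correct i j (h i j hij)⟩
  · intro h i j hij π hπ π' hπ'
    obtain ⟨mc, hmc⟩ := h i j hij
    obtain ⟨hπ'H, hπ'I⟩ := hπ'
    refine ⟨hπ'H, ?_⟩
    show G.obsSeq j π = G.obsSeq j π'
    rw [← hmc π hπ, ← hmc π' hπ'H, hπ'I]
end

section
/- For every finite game graph G with n players and |V| positions, there exists a nondeterministic finite automaton over alphabet V with at most 2n²|V|² states such that, for every word π ∈ V* that is a history of G, the automaton accepts π if and only if the history π does not yield hierarchical information. -/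
set_option maxHeartbeats 1000000

namespace Statement4Aux

open GameGraph

variable {n : ℕ} {V : Type} {A B : Fin n → Type}

lemma snoc_eq_snoc_iff {γ : Type*} {X Y : List γ} {x y : γ} (h : X.length = Y.length) :
    X ++ [x] = Y ++ [y] ↔ X = Y ∧ x = y := by
  constructor
  · intro he
    rcases List.append_inj he h with ⟨h1, h2⟩
    exact ⟨h1, by simpa using h2⟩
  · rintro ⟨rfl, rfl⟩; rfl

lemma history_ne_nil {G : GameGraph n V A B} {π : List V} (h : G.IsHistory π) : π ≠ [] := by
  intro hn; subst hn; simp [GameGraph.IsHistory] at h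

lemma obsSeq_length (G : GameGraph n V A B) (i : Fin n) (π : List V) :
    (G.obsSeq i π).length = π.length - 1 := by
  simp [GameGraph.obsSeq]

lemma obsSeq_snoc (G : GameGraph n V A B) (i : Fin n) {σ : List V} (h : σ ≠ []) (v : V) :
    G.obsSeq i (σ ++ [v]) = G.obsSeq i σ ++ [G.obs i v] := by
  have h1 : 1 ≤ σ.length := by
    cases σ with
    | nil => exact absurd rfl h
    | cons a t => simp
  simp [GameGraph.obsSeq, List.drop_append_of_le_length h1]

lemma head?_append_of_ne_nil {σ : List V} (h : σ ≠ []) (v : V) :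
    (σ ++ [v]).head? = σ.head? := by
  cases σ with
  | nil => exact absurd rfl h
  | cons a t => simp

lemma isHistory_snoc (G : GameGraph n V A B) {σ : List V} (h : σ ≠ []) (v : V) :
    G.IsHistory (σ ++ [v]) ↔ G.IsHistory σ ∧ ∀ u ∈ σ.getLast?, G.step u v := by
  unfold GameGraph.IsHistory List.Chain'
  rw [List.isChain_append, head?_append_of_ne_nil h]
  constructor
  · rintro ⟨hh, h1, -, h3⟩
    exact ⟨⟨hh, h1⟩, fun u hu => h3 u hu v rfl⟩
  · rintro ⟨⟨hh, h1⟩, h2⟩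
    refine ⟨hh, h1, List.isChain_singleton v, ?_⟩
    rintro x hx y hy
    simp only [List.head?_cons, Option.mem_def, Option.some.injEq] at hy
    subst hy
    exact h2 x hx

/-- Equal-length lists with equal obsSeq have equal lengths of obsSeq, etc. -/
lemma length_eq_of_obsSeq_eq {G : GameGraph n V A B} {i : Fin n} {π π' : List V}
    (h : G.obsSeq i π = G.obsSeq i π') (hπ : π ≠ []) (hπ' : π' ≠ []) :
    π.length = π'.length := by
  have h1 := obsSeq_length G i π
  have h2 := obsSeq_length G i π'
  have : π.length - 1 = π'.length - 1 := by rw [← h1, ← h2, h]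
  have l1 : 1 ≤ π.length := List.length_pos_iff.mpr hπ
  have l2 : 1 ≤ π'.length := List.length_pos_iff.mpr hπ'
  omega

section Construction

variable (n V) in
/-- State type: a pair of players `i < j`, two positions, two flags. -/
abbrev St := {p : Fin n × Fin n // p.1 < p.2} × (V × V) × (Bool × Bool)

variable (G : GameGraph n V A B)

/-- The "real" transition relation of the tracking automaton. -/
def trans (s : St n V) (v : V) (t : St n V) : Prop :=
  t.1 = s.1 ∧
  G.step s.2.1.1 t.2.1.1 ∧ G.step s.2.1.2 t.2.1.2 ∧
  G.obs s.1.1.1 t.2.1.1 = G.obs s.1.1.1 v ∧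
  G.obs s.1.1.2 t.2.1.2 = G.obs s.1.1.2 v ∧
  (t.2.2.1 = true ↔ (s.2.2.1 = true ∨ G.obs s.1.1.2 t.2.1.1 ≠ G.obs s.1.1.2 v)) ∧
  (t.2.2.2 = true ↔ (s.2.2.2 = true ∨ G.obs s.1.1.1 t.2.1.2 ≠ G.obs s.1.1.1 v))

/-- The base NFA, over state space `Option (St n V)`. -/
def M : NFA V (Option (St n V)) where
  step q v :=
    match q with
    | none => {t | ∃ t' : St n V, t = some t' ∧ t'.2.1 = (v, v) ∧ t'.2.2 = (false, false)}
    | some s => {t | ∃ t' : St n V, t = some t' ∧ trans G s v t'}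
  start := {none}
  accept := {q | ∃ s : St n V, q = some s ∧ s.2.2 = (true, true)}

/-- Meaning of a state after reading a history `π`. -/
def Real (π : List V) (s : St n V) : Prop :=
  ∃ π₁ π₂ : List V, G.IsHistory π₁ ∧ G.IsHistory π₂ ∧
    π₁.length = π.length ∧ π₂.length = π.length ∧
    G.obsSeq s.1.1.1 π₁ = G.obsSeq s.1.1.1 π ∧
    G.obsSeq s.1.1.2 π₂ = G.obsSeq s.1.1.2 π ∧
    π₁.getLast? = some s.2.1.1 ∧ π₂.getLast? = some s.2.1.2 ∧
    (s.2.2.1 = true ↔ G.obsSeq s.1.1.2 π₁ ≠ G.obsSeq s.1.1.2 π) ∧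
    (s.2.2.2 = true ↔ G.obsSeq s.1.1.1 π₂ ≠ G.obsSeq s.1.1.1 π)

lemma none_not_mem_step (q : Option (St n V)) (v : V) : none ∉ (M G).step q v := by
  cases q <;> · rintro ⟨t', ht, -⟩; exact Option.some_ne_none t' ht.symm

lemma none_not_mem_eval {π : List V} (h : π ≠ []) : none ∉ (M G).evalFrom {none} π := by
  rcases List.eq_nil_or_concat' π with rfl | ⟨σ, v, rfl⟩
  · exact absurd rfl h
  · rw [NFA.evalFrom_append, NFA.evalFrom_singleton]
    intro hmem
    rcases NFA.mem_stepSet.mp hmem with ⟨q, -, hq⟩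
    exact none_not_mem_step G q v hq

/-- The key invariant. -/
lemma eval_iff_real : ∀ (π : List V), G.IsHistory π →
    ∀ s : St n V, (some s ∈ (M G).evalFrom {none} π ↔ Real G π s) := by
  intro π
  induction π using List.reverseRecOn with
  | nil => intro h; exact absurd (history_ne_nil h) (by simp)
  | append_singleton σ v ih =>
    intro hhist s
    by_cases hσ : σ = []
    · -- base case: π = [v], v = init
      subst hσ
      have hv : v = G.init := by
        have := hhist.1; simpa using this
      rw [NFA.evalFrom_append, NFA.evalFrom_singleton]
      constructor
      · intro hmem
        rcases NFA.mem_stepSet.mp hmem with ⟨q, hqS, hq⟩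
        have hq0 : q = none := by simpa using hqS
        subst hq0
        rcases hq with ⟨t', ht', hpos, hfl⟩
        have hts : t' = s := by simpa using ht'.symm
        subst hts
        refine ⟨[v], [v], ?_, ?_, rfl, rfl, rfl, rfl, ?_, ?_, ?_, ?_⟩
        · exact ⟨by simp [hv], List.isChain_singleton v⟩
        · exact ⟨by simp [hv], List.isChain_singleton v⟩
        · simp [hpos]
        · simp [hpos]
        · simp [hfl]
        · simp [hfl]
      · rintro ⟨π₁, π₂, h₁, h₂, hl₁, hl₂, ho₁, ho₂, hg₁, hg₂, hb₁, hb₂⟩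
        -- π₁ and π₂ have length 1 and start at init, hence equal [init] = [v]
        have e₁ : π₁ = [v] := by
          have : π₁.length = 1 := by simpa using hl₁
          rcases List.length_eq_one_iff.mp this with ⟨a, rfl⟩
          have : a = G.init := by have := h₁.1; simpa using this
          simp [this, hv]
        have e₂ : π₂ = [v] := by
          have : π₂.length = 1 := by simpa using hl₂
          rcases List.length_eq_one_iff.mp this with ⟨a, rfl⟩
          have : a = G.init := by have := h₂.1; simpa using this
          simp [this, hv]
        subst e₁; subst e₂
        have hw₁ : s.2.1.1 = v := by simpa using hg₁.symm
        have hw₂ : s.2.1.2 = v := by simpa using hg₂.symm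
        have hfl₁ : s.2.2.1 = false := by
          rcases Bool.eq_false_or_eq_true s.2.2.1 with h | h
          · exact absurd rfl (hb₁.mp h)
          · exact h
        have hfl₂ : s.2.2.2 = false := by
          rcases Bool.eq_false_or_eq_true s.2.2.2 with h | h
          · exact absurd rfl (hb₂.mp h)
          · exact h
        apply NFA.mem_stepSet.mpr
        refine ⟨none, by simp, ?_⟩
        exact ⟨s, rfl, Prod.ext hw₁ hw₂, Prod.ext hfl₁ hfl₂⟩
    · -- inductive case
      have hσhist : G.IsHistory σ := ((isHistory_snoc G hσ v).mp hhist).1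
      have hstep : ∀ u ∈ σ.getLast?, G.step u v := ((isHistory_snoc G hσ v).mp hhist).2
      have IH := ih hσhist
      rw [NFA.evalFrom_append, NFA.evalFrom_singleton]
      constructor
      · intro hmem
        rcases NFA.mem_stepSet.mp hmem with ⟨q, hqS, hq⟩
        cases q with
        | none => exact absurd hqS (none_not_mem_eval G hσ)
        | some s₀ =>
          rcases hq with ⟨t', ht', htrans⟩
          have hts : t' = s := by simpa using ht'.symm
          rw [hts] at htrans
          rcases (IH s₀).mp hqS with ⟨π₁, π₂, h₁, h₂, hl₁, hl₂, ho₁, ho₂, hg₁, hg₂, hb₁, hb₂⟩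
          obtain ⟨hpair, hst₁, hst₂, hoi, hoj, hf₁, hf₂⟩ := htrans
          -- rewrite indices of s into indices of s₀
          refine ⟨π₁ ++ [s.2.1.1], π₂ ++ [s.2.1.2], ?_, ?_, ?_, ?_, ?_, ?_, ?_, ?_, ?_, ?_⟩
          · exact (isHistory_snoc G (history_ne_nil h₁) _).mpr
              ⟨h₁, fun u hu => by
                rw [hg₁] at hu; simp only [Option.mem_def, Option.some.injEq] at hu
                subst hu; exact hst₁⟩
          · exact (isHistory_snoc G (history_ne_nil h₂) _).mpr
              ⟨h₂, fun u hu => by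
                rw [hg₂] at hu; simp only [Option.mem_def, Option.some.injEq] at hu
                subst hu; exact hst₂⟩
          · simp [hl₁]
          · simp [hl₂]
          · rw [obsSeq_snoc G _ (history_ne_nil h₁), obsSeq_snoc G _ hσ, hpair, ho₁, hoi]
          · rw [obsSeq_snoc G _ (history_ne_nil h₂), obsSeq_snoc G _ hσ, hpair, ho₂, hoj]
          · exact List.getLast?_concat
          · exact List.getLast?_concat
          · rw [obsSeq_snoc G _ (history_ne_nil h₁), obsSeq_snoc G _ hσ, hpair]
            have hlen : (G.obsSeq s₀.1.1.2 π₁).length = (G.obsSeq s₀.1.1.2 σ).length := by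
              rw [obsSeq_length, obsSeq_length, hl₁]
            rw [Ne, snoc_eq_snoc_iff hlen]
            rw [hf₁, hb₁]
            tauto
          · rw [obsSeq_snoc G _ (history_ne_nil h₂), obsSeq_snoc G _ hσ, hpair]
            have hlen : (G.obsSeq s₀.1.1.1 π₂).length = (G.obsSeq s₀.1.1.1 σ).length := by
              rw [obsSeq_length, obsSeq_length, hl₂]
            rw [Ne, snoc_eq_snoc_iff hlen]
            rw [hf₂, hb₂]
            tauto
      · rintro ⟨π₁, π₂, h₁, h₂, hl₁, hl₂, ho₁, ho₂, hg₁, hg₂, hb₁, hb₂⟩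
        classical
        -- decompose π₁ = σ₁ ++ [u₁], π₂ = σ₂ ++ [u₂]
        rcases List.eq_nil_or_concat' π₁ with rfl | ⟨σ₁, u₁, rfl⟩
        · exact absurd rfl (history_ne_nil h₁)
        rcases List.eq_nil_or_concat' π₂ with rfl | ⟨σ₂, u₂, rfl⟩
        · exact absurd rfl (history_ne_nil h₂)
        have hσ₁ : σ₁ ≠ [] := by
          intro hc; subst hc
          have : σ.length = 0 := by simpa using hl₁.symm
          exact hσ (List.length_eq_zero_iff.mp this)
        have hσ₂ : σ₂ ≠ [] := by
          intro hc; subst hc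
          have : σ.length = 0 := by simpa using hl₂.symm
          exact hσ (List.length_eq_zero_iff.mp this)
        have hhist₁ : G.IsHistory σ₁ := ((isHistory_snoc G hσ₁ u₁).mp h₁).1
        have hhist₂ : G.IsHistory σ₂ := ((isHistory_snoc G hσ₂ u₂).mp h₂).1
        have hstep₁ : ∀ u ∈ σ₁.getLast?, G.step u u₁ := ((isHistory_snoc G hσ₁ u₁).mp h₁).2
        have hstep₂ : ∀ u ∈ σ₂.getLast?, G.step u u₂ := ((isHistory_snoc G hσ₂ u₂).mp h₂).2
        have hlen₁ : σ₁.length = σ.length := by simpa using hl₁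
        have hlen₂ : σ₂.length = σ.length := by simpa using hl₂
        -- split obsSeq equalities
        rw [obsSeq_snoc G _ hσ₁, obsSeq_snoc G _ hσ] at ho₁
        rw [obsSeq_snoc G _ hσ₂, obsSeq_snoc G _ hσ] at ho₂
        have hol₁ : (G.obsSeq s.1.1.1 σ₁).length = (G.obsSeq s.1.1.1 σ).length := by
          rw [obsSeq_length, obsSeq_length, hlen₁]
        have hol₂ : (G.obsSeq s.1.1.2 σ₂).length = (G.obsSeq s.1.1.2 σ).length := by
          rw [obsSeq_length, obsSeq_length, hlen₂]
        rcases (snoc_eq_snoc_iff hol₁).mp ho₁ with ⟨ho₁', hoi⟩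
        rcases (snoc_eq_snoc_iff hol₂).mp ho₂ with ⟨ho₂', hoj⟩
        -- last elements
        have hu₁ : s.2.1.1 = u₁ := by
          rw [List.getLast?_concat] at hg₁; simpa using hg₁.symm
        have hu₂ : s.2.1.2 = u₂ := by
          rw [List.getLast?_concat] at hg₂; simpa using hg₂.symm
        -- previous flags
        set b₁ : Bool := decide (G.obsSeq s.1.1.2 σ₁ ≠ G.obsSeq s.1.1.2 σ) with hb₁def
        set b₂ : Bool := decide (G.obsSeq s.1.1.1 σ₂ ≠ G.obsSeq s.1.1.1 σ) with hb₂def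
        -- previous positions
        obtain ⟨w₁, hw₁⟩ : ∃ w, σ₁.getLast? = some w := by
          cases hh : σ₁.getLast? with
          | none => exact absurd (List.getLast?_eq_none_iff.mp hh) hσ₁
          | some w => exact ⟨w, rfl⟩
        obtain ⟨w₂, hw₂⟩ : ∃ w, σ₂.getLast? = some w := by
          cases hh : σ₂.getLast? with
          | none => exact absurd (List.getLast?_eq_none_iff.mp hh) hσ₂
          | some w => exact ⟨w, rfl⟩
        set s₀ : St n V := ⟨s.1, (w₁, w₂), (b₁, b₂)⟩ with hs₀
        have hreal₀ : Real G σ s₀ := by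
          refine ⟨σ₁, σ₂, hhist₁, hhist₂, hlen₁, hlen₂, ho₁', ho₂', hw₁, hw₂, ?_, ?_⟩
          · simp [hs₀, hb₁def, decide_eq_true_iff]; exact Iff.rfl
          · simp [hs₀, hb₂def, decide_eq_true_iff]; exact Iff.rfl
        have hmem₀ : some s₀ ∈ (M G).evalFrom {none} σ := (IH s₀).mpr hreal₀
        apply NFA.mem_stepSet.mpr
        refine ⟨some s₀, hmem₀, s, rfl, ?_⟩
        -- verify trans
        refine ⟨rfl, ?_, ?_, ?_, ?_, ?_, ?_⟩
        · rw [hu₁]; exact hstep₁ w₁ hw₁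
        · rw [hu₂]; exact hstep₂ w₂ hw₂
        · rw [hu₁]; exact hoi
        · rw [hu₂]; exact hoj
        · -- flag 1
          rw [obsSeq_snoc G _ hσ₁, obsSeq_snoc G _ hσ] at hb₁
          have hlen' : (G.obsSeq s.1.1.2 σ₁).length = (G.obsSeq s.1.1.2 σ).length := by
            rw [obsSeq_length, obsSeq_length, hlen₁]
          rw [Ne, snoc_eq_snoc_iff hlen'] at hb₁
          rw [hb₁]
          simp only [hs₀, hb₁def, decide_eq_true_iff, hu₁]
          tauto
        · -- flag 2
          rw [obsSeq_snoc G _ hσ₂, obsSeq_snoc G _ hσ] at hb₂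
          have hlen' : (G.obsSeq s.1.1.1 σ₂).length = (G.obsSeq s.1.1.1 σ).length := by
            rw [obsSeq_length, obsSeq_length, hlen₂]
          rw [Ne, snoc_eq_snoc_iff hlen'] at hb₂
          rw [hb₂]
          simp only [hs₀, hb₂def, decide_eq_true_iff, hu₂]
          tauto

/-- Acceptance characterization. -/
lemma accepts_iff {π : List V} (hπ : G.IsHistory π) :
    π ∈ (M G).accepts ↔ ¬ G.HistHI π := by
  have heval : ∀ s : St n V, some s ∈ (M G).eval π ↔ Real G π s :=
    eval_iff_real G π hπ
  constructor
  · rintro ⟨q, hqacc, hqev⟩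
    rcases hqacc with ⟨s, rfl, hfl⟩
    rcases (heval s).mp hqev with ⟨π₁, π₂, h₁, h₂, -, -, ho₁, ho₂, -, -, hb₁, hb₂⟩
    have hfl₁ : s.2.2.1 = true := by rw [hfl]
    have hfl₂ : s.2.2.2 = true := by rw [hfl]
    have hne₁ : G.obsSeq s.1.1.2 π₁ ≠ G.obsSeq s.1.1.2 π := hb₁.mp hfl₁
    have hne₂ : G.obsSeq s.1.1.1 π₂ ≠ G.obsSeq s.1.1.1 π := hb₂.mp hfl₂
    intro hHI
    rcases hHI s.1.1.1 s.1.1.2 with hsub | hsub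
    · have : π₁ ∈ G.InfoSet s.1.1.1 π := ⟨h₁, ho₁.symm⟩
      exact hne₁ ((hsub this).2.symm)
    · have : π₂ ∈ G.InfoSet s.1.1.2 π := ⟨h₂, ho₂.symm⟩
      exact hne₂ ((hsub this).2.symm)
  · intro hHI
    rw [GameGraph.HistHI] at hHI
    push_neg at hHI
    obtain ⟨i, j, hij₁, hij₂⟩ := hHI
    rcases Set.not_subset.mp hij₁ with ⟨π₁, hπ₁, hπ₁'⟩
    rcases Set.not_subset.mp hij₂ with ⟨π₂, hπ₂, hπ₂'⟩
    obtain ⟨hh₁, hI₁⟩ := hπ₁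
    obtain ⟨hh₂, hI₂⟩ := hπ₂
    have hnI₁ : ¬ G.Indist j π π₁ := fun hc => hπ₁' ⟨hh₁, hc⟩
    have hnI₂ : ¬ G.Indist i π π₂ := fun hc => hπ₂' ⟨hh₂, hc⟩
    have hij : i ≠ j := by
      rintro rfl; exact hij₁ (Set.Subset.refl _)
    obtain ⟨u₁, hu₁⟩ : ∃ u, π₁.getLast? = some u := by
      cases hh : π₁.getLast? with
      | none => exact absurd (List.getLast?_eq_none_iff.mp hh) (history_ne_nil hh₁)
      | some w => exact ⟨w, rfl⟩
    obtain ⟨u₂, hu₂⟩ : ∃ u, π₂.getLast? = some u := by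
      cases hh : π₂.getLast? with
      | none => exact absurd (List.getLast?_eq_none_iff.mp hh) (history_ne_nil hh₂)
      | some w => exact ⟨w, rfl⟩
    have hI₁' : G.obsSeq i π₁ = G.obsSeq i π := hI₁.symm
    have hI₂' : G.obsSeq j π₂ = G.obsSeq j π := hI₂.symm
    have hnI₁' : G.obsSeq j π₁ ≠ G.obsSeq j π := fun hc => hnI₁ hc.symm
    have hnI₂' : G.obsSeq i π₂ ≠ G.obsSeq i π := fun hc => hnI₂ hc.symm
    have hlen₁ : π₁.length = π.length :=
      length_eq_of_obsSeq_eq hI₁' (history_ne_nil hh₁) (history_ne_nil hπ)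
    have hlen₂ : π₂.length = π.length :=
      length_eq_of_obsSeq_eq hI₂' (history_ne_nil hh₂) (history_ne_nil hπ)
    rcases lt_or_gt_of_ne hij with hlt | hlt
    · refine ⟨some (⟨⟨(i, j), hlt⟩, (u₁, u₂), (true, true)⟩ : St n V),
        ⟨_, rfl, rfl⟩, (heval _).mpr ?_⟩
      exact ⟨π₁, π₂, hh₁, hh₂, hlen₁, hlen₂, hI₁', hI₂', hu₁, hu₂,
        ⟨fun _ => hnI₁', fun _ => rfl⟩, ⟨fun _ => hnI₂', fun _ => rfl⟩⟩
    · refine ⟨some (⟨⟨(j, i), hlt⟩, (u₂, u₁), (true, true)⟩ : St n V),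
        ⟨_, rfl, rfl⟩, (heval _).mpr ?_⟩
      exact ⟨π₂, π₁, hh₂, hh₁, hlen₂, hlen₁, hI₂', hI₁', hu₂, hu₁,
        ⟨fun _ => hnI₂', fun _ => rfl⟩, ⟨fun _ => hnI₁', fun _ => rfl⟩⟩

end Construction

section EquivTransfer

/-- Transporting an NFA along an equivalence of state spaces. -/
def mapEquiv {α σ τ : Type*} (M : NFA α σ) (e : σ ≃ τ) : NFA α τ where
  step q v := e '' M.step (e.symm q) v
  start := e '' M.start
  accept := e '' M.accept

lemma mapEquiv_stepSet {α σ τ : Type*} (M : NFA α σ) (e : σ ≃ τ) (S : Set σ) (a : α) :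
    (mapEquiv M e).stepSet (e '' S) a = e '' M.stepSet S a := by
  ext t
  simp only [NFA.stepSet, Set.mem_iUnion, Set.mem_image, mapEquiv]
  constructor
  · rintro ⟨q, ⟨⟨s, hs, rfl⟩, x, hx, rfl⟩⟩
    exact ⟨x, ⟨s, ⟨hs, by simpa using hx⟩⟩, rfl⟩
  · rintro ⟨x, ⟨s, hs, hx⟩, rfl⟩
    exact ⟨e s, ⟨s, hs, rfl⟩, x, by simpa using hx, rfl⟩

lemma mapEquiv_evalFrom {α σ τ : Type*} (M : NFA α σ) (e : σ ≃ τ) (S : Set σ) (w : List α) :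
    (mapEquiv M e).evalFrom (e '' S) w = e '' M.evalFrom S w := by
  induction w generalizing S with
  | nil => rfl
  | cons a w ih =>
    show (mapEquiv M e).evalFrom ((mapEquiv M e).stepSet (e '' S) a) w
        = e '' M.evalFrom (M.stepSet S a) w
    rw [mapEquiv_stepSet, ih]

lemma mapEquiv_eval {α σ τ : Type*} (M : NFA α σ) (e : σ ≃ τ) (w : List α) :
    (mapEquiv M e).eval w = e '' M.eval w :=
  mapEquiv_evalFrom M e M.start w

lemma mapEquiv_accepts {α σ τ : Type*} (M : NFA α σ) (e : σ ≃ τ) (w : List α) :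
    w ∈ (mapEquiv M e).accepts ↔ w ∈ M.accepts := by
  constructor
  · rintro ⟨q, hqa, hqe⟩
    rcases hqa with ⟨s, hs, rfl⟩
    rw [mapEquiv_eval] at hqe
    rcases hqe with ⟨s', hs', hss⟩
    have hse : s' = s := e.injective hss
    subst hse
    exact ⟨s', hs, hs'⟩
  · rintro ⟨s, hs, hse⟩
    refine ⟨e s, ⟨s, hs, rfl⟩, ?_⟩
    rw [mapEquiv_eval]
    exact ⟨s, hse, rfl⟩

end EquivTransfer

section Cardinality

lemma card_pairs_bound (n : ℕ) :
    2 * Fintype.card {p : Fin n × Fin n // p.1 < p.2} + n ≤ n ^ 2 := by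
  classical
  let f : {p : Fin n × Fin n // p.1 < p.2} ⊕ {p : Fin n × Fin n // p.1 < p.2} ⊕ Fin n →
      Fin n × Fin n := fun x =>
    match x with
    | Sum.inl p => p.1
    | Sum.inr (Sum.inl p) => ((p.1).2, (p.1).1)
    | Sum.inr (Sum.inr k) => (k, k)
  have hf : Function.Injective f := by
    rintro (p | p | k) (q | q | l) h <;>
      simp only [f, Prod.mk.injEq, Prod.ext_iff] at h
    · exact congrArg Sum.inl (Subtype.ext (Prod.ext h.1 h.2))
    · exact absurd (h.1 ▸ h.2 ▸ q.2) (lt_asymm p.2)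
    · exact absurd (h.1 ▸ h.2 ▸ p.2) (lt_irrefl _)
    · exact absurd (h.1 ▸ h.2 ▸ q.2) (lt_asymm p.2)
    · exact congrArg (Sum.inr ∘ Sum.inl) (Subtype.ext (Prod.ext h.2 h.1))
    · exact absurd (h.1 ▸ h.2 ▸ p.2) (lt_irrefl _)
    · exact absurd (h.2 ▸ h.1 ▸ q.2) (lt_irrefl _)
    · exact absurd (h.2 ▸ h.1 ▸ q.2) (lt_irrefl _)
    · exact congrArg (Sum.inr ∘ Sum.inr) h.1
  have htot := Fintype.card_le_of_injective f hf
  simp only [Fintype.card_sum, Fintype.card_prod, Fintype.card_fin] at htot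
  rw [pow_two]
  omega

end Cardinality

end Statement4Aux

/-- For every finite game graph with `n` players and `|V|` positions there
is a nondeterministic finite automaton over alphabet `V` with at most `2n²|V|²` states that
accepts exactly those histories that do not yield hierarchical information. -/
theorem statement4 {n : ℕ} {V : Type} {A B : Fin n → Type}
    [Fintype V] [∀ i, Fintype (A i)] [∀ i, Fintype (B i)]
    (G : GameGraph n V A B) :
    ∃ (m : ℕ) (nfa : NFA V (Fin m)),
      m ≤ 2 * n ^ 2 * Fintype.card V ^ 2 ∧
      ∀ π : List V, G.IsHistory π → (π ∈ nfa.accepts ↔ ¬ G.HistHI π) := by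
  classical
  open Statement4Aux in
  rcases Nat.eq_zero_or_pos n with hn | hn
  · -- trivial case `n = 0`: every history yields HI vacuously
    refine ⟨0, ⟨fun _ _ => ∅, ∅, ∅⟩, Nat.zero_le _, ?_⟩
    intro π hπ
    constructor
    · rintro ⟨q, hq, -⟩
      exact absurd hq (Set.notMem_empty q)
    · intro h
      exact absurd (fun i j => absurd i.2 (by omega)) h
  · refine ⟨Fintype.card (Option (St n V)),
      mapEquiv (M G) (Fintype.equivFin (Option (St n V))), ?_, ?_⟩
    · have hP := card_pairs_bound n
      have hc : 1 ≤ Fintype.card V := Fintype.card_pos_iff.mpr ⟨G.init⟩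
      set P := Fintype.card {p : Fin n × Fin n // p.1 < p.2} with hPdef
      set c := Fintype.card V with hcdef
      have hm : Fintype.card (Option (St n V)) = P * (c * c * 4) + 1 := by
        simp [St, Fintype.card_option, Fintype.card_prod, Fintype.card_bool, ← hPdef, ← hcdef]
      rw [hm]
      have e1 : (2 * P + n) * (c * c) ≤ n ^ 2 * (c * c) := Nat.mul_le_mul_right _ hP
      have e2 : 1 ≤ n * (c * c) :=
        le_trans (by norm_num) (Nat.mul_le_mul hn (Nat.mul_le_mul hc hc))
      nlinarith [e1, e2]
    · intro π hπ
      rw [mapEquiv_accepts]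
      exact accepts_iff G hπ
end

section
/- For every finite game graph G, the set of histories of G that yield hierarchical information is a regular language over the alphabet V, i.e., it is recognized by some deterministic finite automaton over V. -/
open Classical

namespace GameGraph2

variable {n : ℕ} {V : Type} {A B : Fin n → Type}

lemma hist_ne_nil (G : GameGraph n V A B) {π : List V} (h : G.IsHistory π) : π ≠ [] := by
  rintro rfl; simp [GameGraph.IsHistory] at h

lemma getLast?_eq {l : List V} (h : l ≠ []) (d : V) : l.getLast? = some (l.getLastD d) := by
  rw [List.getLastD_eq_getLast?, List.getLast?_eq_getLast h]; simp

lemma head?_append_left {l : List V} (h : l ≠ []) (m : List V) : (l ++ m).head? = l.head? := by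
  cases l with
  | nil => simp at h
  | cons x xs => simp

lemma isHistory_singleton (G : GameGraph n V A B) (v : V) :
    G.IsHistory [v] ↔ v = G.init := by
  simp [GameGraph.IsHistory, List.Chain']

lemma isHistory_append (G : GameGraph n V A B) {π : List V} (hπ : π ≠ []) (v : V) :
    G.IsHistory (π ++ [v]) ↔ G.IsHistory π ∧ G.step (π.getLastD G.init) v := by
  unfold GameGraph.IsHistory
  rw [List.Chain', List.isChain_append, head?_append_left hπ]
  constructor
  · rintro ⟨hh, hc, _, hlast⟩
    exact ⟨⟨hh, hc⟩, hlast _ (getLast?_eq hπ G.init) v rfl⟩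
  · rintro ⟨⟨hh, hc⟩, hstep⟩
    refine ⟨hh, hc, List.isChain_singleton v, ?_⟩
    intro x hx y hy
    rw [getLast?_eq hπ G.init] at hx
    simp only [Option.mem_def, Option.some_inj, List.head?_cons] at hx hy
    subst hx; subst hy; exact hstep

lemma obsSeq_append (G : GameGraph n V A B) (i : Fin n) {π : List V} (hπ : π ≠ []) (v : V) :
    G.obsSeq i (π ++ [v]) = G.obsSeq i π ++ [G.obs i v] := by
  unfold GameGraph.obsSeq
  rw [List.drop_append_of_le_length (by cases π; simp at hπ; simp)]
  simp

lemma indist_append (G : GameGraph n V A B) (i : Fin n) {π π' : List V}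
    (hπ : π ≠ []) (hπ' : π' ≠ []) (v w : V) :
    G.Indist i (π ++ [v]) (π' ++ [w]) ↔ G.Indist i π π' ∧ G.obs i w = G.obs i v := by
  unfold GameGraph.Indist
  rw [obsSeq_append G i hπ, obsSeq_append G i hπ']
  constructor
  · intro h
    obtain ⟨h1, h2⟩ := List.append_inj' h rfl
    exact ⟨h1, by simpa using h2.symm⟩
  · rintro ⟨h1, h2⟩; rw [h1, h2]

lemma indist_length (G : GameGraph n V A B) {i : Fin n} {π π' : List V}
    (hπ : π ≠ []) (hπ' : π' ≠ []) (h : G.Indist i π π') : π.length = π'.length := by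
  have h0 := congrArg List.length h
  simp only [GameGraph.obsSeq, List.length_map, List.length_drop] at h0
  have h1 : 0 < π.length := List.length_pos_iff.mpr hπ
  have h2 : 0 < π'.length := List.length_pos_iff.mpr hπ'
  omega

/-- The key predicate tracked by the automaton: `p` records the last vertex and the
indistinguishability pattern of some history of the same length as `π`. -/
def goodT (G : GameGraph n V A B) (π : List V) (p : V × (Fin n → Bool)) : Prop :=
  ∃ π', G.IsHistory π' ∧ π'.length = π.length ∧ π'.getLast? = some p.1 ∧
    p.2 = fun i => decide (G.Indist i π π')

lemma infoSet_subset_iff (G : GameGraph n V A B) {π : List V} (hπ : G.IsHistory π)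
    (i j : Fin n) :
    G.InfoSet i π ⊆ G.InfoSet j π ↔
      ∀ p, goodT G π p → p.2 i = true → p.2 j = true := by
  constructor
  · rintro h p ⟨π', h', hlen, hlast, hp2⟩ hi
    rw [hp2] at hi ⊢
    simp only [decide_eq_true_eq] at hi ⊢
    have : π' ∈ G.InfoSet i π := ⟨h', hi⟩
    exact (h this).2
  · rintro h π' ⟨h', hind⟩
    refine ⟨h', ?_⟩
    have hne' := hist_ne_nil G h'
    have hp : goodT G π (π'.getLastD G.init, fun i => decide (G.Indist i π π')) :=
      ⟨π', h', (indist_length G (hist_ne_nil G hπ) hne' hind).symm,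
        getLast?_eq hne' G.init, rfl⟩
    have := h _ hp (by simpa using hind)
    simpa using this

/-- State type of the automaton. -/
abbrev HSt (n : ℕ) (V : Type) : Type := Option (Unit ⊕ (V × ((V × (Fin n → Bool)) → Bool)))

/-- Transition function. -/
noncomputable def htrans (G : GameGraph n V A B) (q : HSt n V) (v : V) : HSt n V :=
  match q with
  | none => none
  | some (Sum.inl _) =>
      if v = G.init then
        some (Sum.inr (v, fun p => decide (p.1 = G.init ∧ p.2 = fun _ => true)))
      else none
  | some (Sum.inr (u, T)) =>
      if G.step u v then
        some (Sum.inr (v, fun p => decide (∃ v' s, T (v', s) = true ∧ G.step v' p.1 ∧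
          p.2 = fun i => s i && decide (G.obs i p.1 = G.obs i v))))
      else none

/-- The intended state after reading `π`. -/
noncomputable def hencode (G : GameGraph n V A B) (π : List V) : HSt n V :=
  if π = [] then some (Sum.inl ())
  else if G.IsHistory π then
    some (Sum.inr (π.getLastD G.init, fun p => decide (goodT G π p)))
  else none

lemma goodT_singleton (G : GameGraph n V A B) (v : V) (p : V × (Fin n → Bool)) :
    goodT G [v] p ↔ (p.1 = G.init ∧ p.2 = fun _ => true) := by
  constructor
  · rintro ⟨π', h', hlen, hlast, hp2⟩
    have hne' := hist_ne_nil G h'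
    obtain ⟨w, rfl⟩ : ∃ w, π' = [w] := by
      cases π' with
      | nil => simp at hne'
      | cons x xs => cases xs with
        | nil => exact ⟨x, rfl⟩
        | cons y ys => simp at hlen
    have hw : w = G.init := (isHistory_singleton G w).mp h'
    simp only [List.getLast?_singleton, Option.some_inj] at hlast
    refine ⟨hlast ▸ hw, ?_⟩
    rw [hp2]; funext i
    have : G.Indist i [v] [w] := by simp [GameGraph.Indist, GameGraph.obsSeq]
    simp [this]
  · rintro ⟨h1, h2⟩
    refine ⟨[G.init], (isHistory_singleton G _).mpr rfl, rfl, by simp [h1], ?_⟩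
    rw [h2]; funext i
    have : G.Indist i [v] [G.init] := by simp [GameGraph.Indist, GameGraph.obsSeq]
    simp [this]

lemma goodT_append (G : GameGraph n V A B) {π : List V} (hπ : π ≠ [])
    (v : V) (p : V × (Fin n → Bool)) :
    goodT G (π ++ [v]) p ↔ ∃ v' s, goodT G π (v', s) ∧ G.step v' p.1 ∧
      p.2 = fun i => s i && decide (G.obs i p.1 = G.obs i v) := by
  constructor
  · rintro ⟨π'', h'', hlen, hlast, hp2⟩
    have hne'' := hist_ne_nil G h''
    have hlen2 : π''.length = π.length + 1 := by simpa using hlen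
    set π' := π''.dropLast with hπ'def
    have hne' : π' ≠ [] := by
      have hl : π'.length = π.length := by simp [hπ'def, hlen2]
      intro hc; rw [hc] at hl; simp at hl; exact hπ (List.length_eq_zero_iff.mp hl.symm)
    have hsplit : π' ++ [π''.getLast hne''] = π'' := List.dropLast_append_getLast hne''
    have hw : π''.getLast hne'' = p.1 := by
      have := List.getLast?_eq_getLast hne''
      rw [this] at hlast; simpa using hlast
    rw [hw] at hsplit
    have h' : G.IsHistory π' ∧ G.step (π'.getLastD G.init) p.1 := by
      rw [← isHistory_append G hne']; rw [hsplit]; exact h''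
    refine ⟨π'.getLastD G.init, fun i => decide (G.Indist i π π'), ?_, h'.2, ?_⟩
    · exact ⟨π', h'.1, by simp [hπ'def, hlen2], getLast?_eq hne' G.init, rfl⟩
    · rw [hp2]; funext i
      have hiff : G.Indist i (π ++ [v]) π'' ↔
          G.Indist i π π' ∧ G.obs i p.1 = G.obs i v := by
        rw [← hsplit]; exact indist_append G i hπ hne' v p.1
      by_cases hA : G.Indist i π π' <;> by_cases hB : G.obs i p.1 = G.obs i v <;>
        simp [hA, hB, hiff]
  · rintro ⟨v', s, ⟨π', h', hlen, hlast, hs⟩, hstep, hp2⟩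
    have hne' := hist_ne_nil G h'
    have hv' : π'.getLastD G.init = v' := by
      rw [getLast?_eq hne' G.init] at hlast; simpa using hlast
    have hs' : s = fun i => decide (G.Indist i π π') := hs
    refine ⟨π' ++ [p.1], ?_, by simp [hlen], ?_, ?_⟩
    · rw [isHistory_append G hne']; exact ⟨h', hv' ▸ hstep⟩
    · rw [getLast?_eq (l := π' ++ [p.1]) (by simp) G.init]
      simp [List.getLastD_eq_getLast?]
    · rw [hp2, hs']; funext i
      have hiff : G.Indist i (π ++ [v]) (π' ++ [p.1]) ↔
          G.Indist i π π' ∧ G.obs i p.1 = G.obs i v := indist_append G i hπ hne' v p.1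
      by_cases hA : G.Indist i π π' <;> by_cases hB : G.obs i p.1 = G.obs i v <;>
        simp [hA, hB, hiff]

lemma hencode_append (G : GameGraph n V A B) (π : List V) (v : V) :
    hencode G (π ++ [v]) = htrans G (hencode G π) v := by
  by_cases hπ : π = []
  · subst hπ
    have h0 : hencode G ([] : List V) = some (Sum.inl ()) := by simp [hencode]
    rw [h0]
    simp only [List.nil_append, htrans]
    by_cases hv : v = G.init
    · have hh : G.IsHistory [v] := (isHistory_singleton G v).mpr hv
      rw [if_pos hv]
      simp only [hencode, if_neg (show ¬ ([v] : List V) = [] by simp), if_pos hh]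
      simp only [Option.some_inj, Sum.inr.injEq, Prod.mk.injEq]
      refine ⟨by simp [List.getLastD], ?_⟩
      funext p
      exact decide_eq_decide.mpr (goodT_singleton G v p)
    · have hh : ¬ G.IsHistory [v] := fun h => hv ((isHistory_singleton G v).mp h)
      rw [if_neg hv]
      simp only [hencode, if_neg (show ¬ ([v] : List V) = [] by simp), if_neg hh]
  · by_cases hh : G.IsHistory π
    · have h0 : hencode G π = some (Sum.inr (π.getLastD G.init,
          fun p => decide (goodT G π p))) := by simp [hencode, hπ, hh]
      rw [h0]
      simp only [htrans]
      by_cases hs : G.step (π.getLastD G.init) v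
      · have hh2 : G.IsHistory (π ++ [v]) := (isHistory_append G hπ v).mpr ⟨hh, hs⟩
        rw [if_pos hs]
        simp only [hencode, if_neg (show ¬ π ++ [v] = [] by simp), if_pos hh2]
        simp only [Option.some_inj, Sum.inr.injEq, Prod.mk.injEq]
        constructor
        · simp [List.getLastD_eq_getLast?]
        · funext p
          refine decide_eq_decide.mpr ?_
          rw [goodT_append G hπ v p]
          constructor
          · rintro ⟨v', s, hg, h2, h3⟩
            exact ⟨v', s, by simpa using hg, h2, h3⟩
          · rintro ⟨v', s, hg, h2, h3⟩
            exact ⟨v', s, by simpa using hg, h2, h3⟩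
      · have hh2 : ¬ G.IsHistory (π ++ [v]) := fun h =>
          hs ((isHistory_append G hπ v).mp h).2
        rw [if_neg hs]
        simp only [hencode, if_neg (show ¬ π ++ [v] = [] by simp), if_neg hh2]
    · have h0 : hencode G π = none := by simp [hencode, hπ, hh]
      have hh2 : ¬ G.IsHistory (π ++ [v]) := fun h =>
        hh ((isHistory_append G hπ v).mp h).1
      rw [h0]
      simp only [hencode, if_neg (show ¬ π ++ [v] = [] by simp), if_neg hh2, htrans]

/-- Acceptance condition on states. -/
def hAccept (n : ℕ) (V : Type) : Set (HSt n V) :=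
  {q | ∃ p : V × ((V × (Fin n → Bool)) → Bool), q = some (Sum.inr p) ∧ ∀ i j : Fin n,
        (∀ x, p.2 x = true → x.2 i = true → x.2 j = true) ∨
        (∀ x, p.2 x = true → x.2 j = true → x.2 i = true)}

lemma foldl_htrans (G : GameGraph n V A B) (π : List V) :
    List.foldl (htrans G) (some (Sum.inl ())) π = hencode G π := by
  induction π using List.reverseRecOn with
  | nil => simp [hencode]
  | append_singleton l a ih =>
      rw [List.foldl_append, List.foldl_cons, List.foldl_nil, ih, hencode_append]

lemma hencode_mem_iff (G : GameGraph n V A B) (π : List V) :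
    hencode G π ∈ hAccept n V ↔ (G.IsHistory π ∧ G.HistHI π) := by
  simp only [hAccept, Set.mem_setOf_eq]
  by_cases hπ : π = []
  · subst hπ
    simp only [hencode, if_pos rfl]
    constructor
    · rintro ⟨p, hp, -⟩; simp at hp
    · rintro ⟨h, -⟩; exact absurd rfl (hist_ne_nil G h)
  · by_cases hh : G.IsHistory π
    · simp only [hencode, if_neg hπ, if_pos hh]
      constructor
      · rintro ⟨p, hp, hcond⟩
        simp only [Option.some_inj, Sum.inr.injEq] at hp
        subst hp
        refine ⟨hh, fun i j => ?_⟩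
        rcases hcond i j with h | h
        · exact Or.inl ((infoSet_subset_iff G hh i j).mpr
            (fun x hx hxi => h x (by simpa using hx) hxi))
        · exact Or.inr ((infoSet_subset_iff G hh j i).mpr
            (fun x hx hxi => h x (by simpa using hx) hxi))
      · rintro ⟨-, hHI⟩
        refine ⟨_, rfl, fun i j => ?_⟩
        rcases hHI i j with h | h
        · exact Or.inl (fun x hx hxi =>
            (infoSet_subset_iff G hh i j).mp h x (by simpa using hx) hxi)
        · exact Or.inr (fun x hx hxi =>
            (infoSet_subset_iff G hh j i).mp h x (by simpa using hx) hxi)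
    · simp only [hencode, if_neg hπ, if_neg hh]
      constructor
      · rintro ⟨p, hp, -⟩; simp at hp
      · rintro ⟨h, -⟩; exact absurd h hh

end GameGraph2
/-- For every finite game graph, the set of histories yielding hierarchical
information is a regular language over the alphabet `V`: it is recognized by a deterministic
finite automaton with a finite state set. -/
theorem statement5 {n : ℕ} {V : Type} {A B : Fin n → Type}
    [Fintype V] [∀ i, Fintype (A i)] [∀ i, Fintype (B i)]
    (G : GameGraph n V A B) :
    ∃ (σ : Type) (_ : Fintype σ) (M : DFA V σ),
      ∀ π : List V, π ∈ M.accepts ↔ (G.IsHistory π ∧ G.HistHI π) := by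
  classical
  refine ⟨GameGraph2.HSt n V, inferInstance,
    ⟨fun q v => GameGraph2.htrans G q v, some (Sum.inl ()), GameGraph2.hAccept n V⟩,
    fun π => ?_⟩
  rw [DFA.mem_accepts]
  have h2 : DFA.eval (⟨fun q v => GameGraph2.htrans G q v, some (Sum.inl ()),
      GameGraph2.hAccept n V⟩ : DFA V (GameGraph2.HSt n V)) π
      = GameGraph2.hencode G π := GameGraph2.foldl_htrans G π
  rw [h2]
  exact GameGraph2.hencode_mem_iff G π
end

section
/- It is decidable, given a finite game graph G, whether G yields dynamic hierarchical information, i.e., whether every history of G yields hierarchical information. -/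
/-! Finitely-coded games: a concrete, `Primcodable` representation of finite game
graphs, used to state decidability results.  A coded game consists of: the number
of positions (positions are `0, …, numPos`, with initial position `0`), a finite
list of moves `(source, action profile, target)`, and an observation table whose
`i`-th row gives the observations of player `i` at each position (its length is
the number of players). -/

namespace CG

/-- A coded finite game graph: `(numPos, moves, obsTable)`. -/
abbrev Game : Type := ℕ × List (ℕ × List ℕ × ℕ) × List (List ℕ)

def numPos (c : Game) : ℕ := c.1

def moves (c : Game) : List (ℕ × List ℕ × ℕ) := c.2.1

def obsTable (c : Game) : List (List ℕ) := c.2.2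

/-- The number of players. -/
def numPlayers (c : Game) : ℕ := (obsTable c).length

/-- The observation of player `i` at position `v`. -/
def obsOf (c : Game) (i v : ℕ) : ℕ := ((obsTable c).getD i []).getD v 0

/-- The move relation, labelled by action profiles (coded as lists). -/
def Move (c : Game) (u : ℕ) (a : List ℕ) (w : ℕ) : Prop := (u, a, w) ∈ moves c

/-- Two positions are linked by a move for some action profile. -/
def Step (c : Game) (u w : ℕ) : Prop := ∃ a, Move c u a w

/-- A history: a nonempty sequence of valid positions starting at the initial
position `0`, each consecutive pair lying on a move. -/
def IsHistory (c : Game) (π : List ℕ) : Prop :=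
  π.head? = some 0 ∧ (∀ v ∈ π, v ≤ numPos c) ∧ π.Chain' (Step c)

/-- The observation sequence of player `i` along a history (the observation at
the initial position is discarded). -/
def obsSeq (c : Game) (i : ℕ) (π : List ℕ) : List ℕ := (π.drop 1).map (obsOf c i)

/-- Indistinguishability for player `i`. -/
def Indist (c : Game) (i : ℕ) (π π' : List ℕ) : Prop := obsSeq c i π = obsSeq c i π'

/-- The information set of player `i` at history `π`. -/
def InfoSet (c : Game) (i : ℕ) (π : List ℕ) : Set (List ℕ) :=
  { π' | IsHistory c π' ∧ Indist c i π π' }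

/-- The history `π` yields hierarchical information: the information sets of the
players are totally ordered by inclusion. -/
def HistHI (c : Game) (π : List ℕ) : Prop :=
  ∀ i < numPlayers c, ∀ j < numPlayers c,
    InfoSet c i π ⊆ InfoSet c j π ∨ InfoSet c j π ⊆ InfoSet c i π

/-- Static hierarchical information: there is a total order on the players such
that smaller players always have smaller information sets. -/
def StaticHI (c : Game) : Prop :=
  ∃ ord : ℕ → ℕ → Prop,
    (∀ i < numPlayers c, ord i i) ∧
    (∀ i < numPlayers c, ∀ j < numPlayers c, ord i j ∨ ord j i) ∧
    (∀ i < numPlayers c, ∀ j < numPlayers c, ∀ k < numPlayers c,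
      ord i j → ord j k → ord i k) ∧
    (∀ i < numPlayers c, ∀ j < numPlayers c, ord i j → ord j i → i = j) ∧
    (∀ i < numPlayers c, ∀ j < numPlayers c, ord i j →
      ∀ π, IsHistory c π → InfoSet c i π ⊆ InfoSet c j π)

/-- Dynamic hierarchical information: every history yields hierarchical information. -/
def DynamicHI (c : Game) : Prop := ∀ π, IsHistory c π → HistHI c π

/-- The prefix `v₀ … v_t` of a play, as a list. -/
def playPrefix (f : ℕ → ℕ) (t : ℕ) : List ℕ := (List.range (t + 1)).map f

/-- A play: an infinite sequence all of whose prefixes are histories. -/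
def IsPlay (c : Game) (f : ℕ → ℕ) : Prop := ∀ t, IsHistory c (playPrefix f t)

/-- Recurring hierarchical information: along every play, infinitely many prefix
histories yield hierarchical information. -/
def RecurringHI (c : Game) : Prop :=
  ∀ f, IsPlay c f → ∀ T, ∃ t, T ≤ t ∧ HistHI c (playPrefix f t)

/-- Information-consistency of a strategy of player `i`. -/
def Consistent (c : Game) (i : ℕ) (s : List ℕ → ℕ) : Prop :=
  ∀ π π', IsHistory c π → IsHistory c π' → Indist c i π π' → s π = s π'

/-- A play follows a strategy profile `s`: at each round some move is taken whose
action profile agrees with the actions prescribed by `s` for every player. -/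
def Follows (c : Game) (s : ℕ → List ℕ → ℕ) (f : ℕ → ℕ) : Prop :=
  IsPlay c f ∧ ∀ t, ∃ a, Move c (f t) a (f (t + 1)) ∧
    ∀ i < numPlayers c, a.getD i 0 = s i (playPrefix f t)

/-- A history follows a strategy profile `s`. -/
def HFollows (c : Game) (s : ℕ → List ℕ → ℕ) (π : List ℕ) : Prop :=
  IsHistory c π ∧ ∀ k, k + 1 < π.length →
    ∃ a, Move c (π.getD k 0) a (π.getD (k + 1) 0) ∧
      ∀ i < numPlayers c, a.getD i 0 = s i (π.take (k + 1))

/-- A coded deterministic parity automaton over alphabet `ℕ`: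
`(transition table ((state, letter), target), priorities)`; initial state `0`;
missing transitions default to state `0`. -/
abbrev DPA : Type := List ((ℕ × ℕ) × ℕ) × List ℕ

/-- The transition function of a coded parity automaton. -/
def dpaStep (d : DPA) (q v : ℕ) : ℕ :=
  ((d.1.find? fun e => e.1.1 == q && e.1.2 == v).map Prod.snd).getD 0

/-- The run of a coded parity automaton on an infinite word. -/
def dpaRun (d : DPA) (f : ℕ → ℕ) : ℕ → ℕ
  | 0 => 0
  | t + 1 => dpaStep d (dpaRun d f t) (f t)

/-- The priority of a state. -/
def prio (d : DPA) (q : ℕ) : ℕ := d.2.getD q 0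

/-- Parity acceptance: the least priority occurring infinitely often in the run is even. -/
def Accepts (d : DPA) (f : ℕ → ℕ) : Prop :=
  Even (sInf { p | ∃ᶠ t in Filter.atTop, prio d (dpaRun d f t) = p })

/-- A distributed winning strategy for the ω-regular winning condition given by
the parity automaton `d` over the positions. -/
def WinningProfile (c : Game) (d : DPA) (s : ℕ → List ℕ → ℕ) : Prop :=
  (∀ i < numPlayers c, Consistent c i (s i)) ∧ ∀ f, Follows c s f → Accepts d f

/-- The game admits a distributed winning strategy. -/
def HasDWS (c : Game) (d : DPA) : Prop := ∃ s, WinningProfile c d s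

/-- A Moore machine with finite state set `Q`, input alphabet `σ`, output alphabet `γ`. -/
structure Moore (σ γ : Type) where
  Q : Type
  finQ : Fintype Q
  q0 : Q
  δ : Q → σ → Q
  out : Q → γ

/-- The output letter of a Moore machine after reading a word. -/
def Moore.output {σ γ : Type} (mc : Moore σ γ) (w : List σ) : γ :=
  mc.out (w.foldl mc.δ mc.q0)

/-- A finite-state strategy for player `i`: implemented by a Moore machine reading
the observation sequence of the history. -/
def FinStateStrategy (c : Game) (i : ℕ) (s : List ℕ → ℕ) : Prop :=
  ∃ mc : Moore ℕ ℕ, ∀ π, IsHistory c π → s π = mc.output (obsSeq c i π)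

/-- The game admits a finite-state distributed winning strategy. -/
def HasFinDWS (c : Game) (d : DPA) : Prop :=
  ∃ s, WinningProfile c d s ∧ ∀ i < numPlayers c, FinStateStrategy c i (s i)

/-- The colour of position `v` under a coded colouring. -/
def colOf (γ : List ℕ) (v : ℕ) : ℕ := γ.getD v 0

/-- The colouring `γ` is observable: each player's observation distinguishes
positions of different colours. -/
def Observable (c : Game) (γ : List ℕ) : Prop :=
  ∀ i < numPlayers c, ∀ v ≤ numPos c, ∀ w ≤ numPos c,
    colOf γ v ≠ colOf γ w → obsOf c i v ≠ obsOf c i w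

/-- A distributed winning strategy for the winning condition over colours given
by the colouring `γ` and the parity automaton `d` over colours. -/
def WinningProfileCol (c : Game) (γ : List ℕ) (d : DPA) (s : ℕ → List ℕ → ℕ) : Prop :=
  (∀ i < numPlayers c, Consistent c i (s i)) ∧
    ∀ f, Follows c s f → Accepts d fun t => colOf γ (f t)

/-- The game admits a distributed winning strategy (colour version). -/
def HasDWSCol (c : Game) (γ : List ℕ) (d : DPA) : Prop := ∃ s, WinningProfileCol c γ d s

/-- The game admits a finite-state distributed winning strategy (colour version). -/
def HasFinDWSCol (c : Game) (γ : List ℕ) (d : DPA) : Prop :=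
  ∃ s, WinningProfileCol c γ d s ∧ ∀ i < numPlayers c, FinStateStrategy c i (s i)

/-- The strategy profile `s` maintains hierarchical information: every history
that follows `s` yields hierarchical information. -/
def Maintains (c : Game) (s : ℕ → List ℕ → ℕ) : Prop :=
  ∀ π, HFollows c s π → HistHI c π

end CG

namespace S6

open CG

/-! ### The checker -/

/-- All lists of length `ℓ` with entries `< b`. -/
def tuples (b : ℕ) : ℕ → List (List ℕ)
  | 0 => [[]]
  | ℓ + 1 => (List.range b).flatMap fun v => (tuples b ℓ).map (v :: ·)

/-- Bound on the length of histories that need to be inspected. -/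
def bnd (c : Game) : ℕ := 4 * (c.1 + 1) * (c.1 + 1) * (c.1 + 1)

def obsB (c : Game) (i v : ℕ) : ℕ := ((c.2.2).getD i []).getD v 0

def stepB (c : Game) (u w : ℕ) : Bool :=
  (c.2.1).any fun m => m.1 == u && m.2.2 == w

def histB (c : Game) (l : List ℕ) : Bool :=
  (l.getD 0 1 == 0) && (l.all fun v => v ≤ c.1) &&
    ((List.range (l.length - 1)).all fun k => stepB c (l.getD k 0) (l.getD (k + 1) 0))

def indistB (c : Game) (i : ℕ) (l l' : List ℕ) : Bool :=
  (l.length == l'.length) &&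
    ((List.range (l.length - 1)).all fun t =>
      obsB c i (l.getD (t + 1) 0) == obsB c i (l'.getD (t + 1) 0))

def body (c : Game) (i j : ℕ) (p : List ℕ) (p1 : List ℕ) (p2 : List ℕ) : Bool :=
  !(histB c p && histB c p1 && histB c p2 && indistB c i p p1 && !(indistB c j p p1)
      && indistB c j p p2 && !(indistB c i p p2))

def check (c : Game) : Bool :=
  (List.range (bnd c + 1)).all fun l =>
    (List.range (c.2.2).length).all fun i =>
      (List.range (c.2.2).length).all fun j =>
        (tuples (c.1 + 1) l).all fun p =>
          (tuples (c.1 + 1) l).all fun p1 =>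
            (tuples (c.1 + 1) l).all fun p2 => body c i j p p1 p2

/-! ### Primitive recursiveness of the checker -/

theorem list_all_primrec {α β : Type} [Primcodable α] [Primcodable β]
    {f : α → List β} {p : α → β → Bool} (hf : Primrec f) (hp : Primrec₂ p) :
    Primrec fun a => (f a).all (p a) := by
  have : Primrec fun a => (f a).foldr (fun b s => p a b && s) true :=
    Primrec.list_foldr hf (Primrec.const true)
      (Primrec.and.comp (hp.comp .fst (Primrec.fst.comp .snd)) (Primrec.snd.comp .snd)).to₂
  refine this.of_eq fun a => ?_
  induction f a with
  | nil => rfl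
  | cons b l ih => simp [List.all_cons, ih]

theorem list_any_primrec {α β : Type} [Primcodable α] [Primcodable β]
    {f : α → List β} {p : α → β → Bool} (hf : Primrec f) (hp : Primrec₂ p) :
    Primrec fun a => (f a).any (p a) := by
  have : Primrec fun a => (f a).foldr (fun b s => p a b || s) false :=
    Primrec.list_foldr hf (Primrec.const false)
      (Primrec.or.comp (hp.comp .fst (Primrec.fst.comp .snd)) (Primrec.snd.comp .snd)).to₂
  refine this.of_eq fun a => ?_
  induction f a with
  | nil => rfl
  | cons b l ih => simp [List.any_cons, ih]

open Primrec in
theorem tuples_primrec : Primrec₂ tuples := by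
  have hcons : Primrec fun w : (((ℕ × ℕ) × ℕ × List (List ℕ)) × ℕ) × List ℕ =>
      w.1.2 :: w.2 := list_cons.comp (snd.comp fst) snd
  have hg : Primrec fun z : ((ℕ × ℕ) × ℕ × List (List ℕ)) × ℕ =>
      (z.1.2.2.map (z.2 :: ·)) := list_map (snd.comp (snd.comp fst)) hcons.to₂
  have hh : Primrec fun q : (ℕ × ℕ) × ℕ × List (List ℕ) =>
      (List.range q.1.1).flatMap fun v => q.2.2.map (v :: ·) :=
    list_flatMap (list_range.comp (fst.comp fst)) hg.to₂
  have h := Primrec.nat_rec' (f := fun a : ℕ × ℕ => a.2)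
    (g := fun _ : ℕ × ℕ => ([[]] : List (List ℕ)))
    (h := fun a y => (List.range a.1).flatMap fun v => y.2.map (v :: ·))
    snd (const [[]]) hh.to₂
  have h2 : Primrec fun a : ℕ × ℕ => tuples a.1 a.2 := by
    refine h.of_eq fun a => ?_
    obtain ⟨b, l⟩ := a
    induction l with
    | zero => rfl
    | succ n ih => simpa [tuples] using congrArg (fun L => (List.range b).flatMap
        fun v => L.map (v :: ·)) ih
  exact h2

open Primrec in
theorem check_primrec : Primrec check := by
  have hobs : Primrec fun y : Game × ℕ × ℕ => obsB y.1 y.2.1 y.2.2 :=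
    ((list_getD 0).comp ((list_getD ([] : List ℕ)).comp
      (snd.comp (snd.comp fst)) (fst.comp snd)) (snd.comp snd)).of_eq fun _ => rfl
  have hstep : Primrec fun y : Game × ℕ × ℕ => stepB y.1 y.2.1 y.2.2 := by
    have hp : Primrec fun z : (Game × ℕ × ℕ) × ℕ × List ℕ × ℕ =>
        (z.2.1 == z.1.2.1 && z.2.2.2 == z.1.2.2) :=
      Primrec.and.comp
        (Primrec.beq.comp (fst.comp snd) (fst.comp (snd.comp fst)))
        (Primrec.beq.comp (snd.comp (snd.comp snd)) (snd.comp (snd.comp fst)))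
    exact (list_any_primrec (fst.comp (snd.comp fst)) hp.to₂).of_eq fun y => rfl
  have hhist : Primrec fun y : Game × List ℕ => histB y.1 y.2 := by
    have hA : Primrec fun y : Game × List ℕ => (y.2.getD 0 1 == 0) :=
      Primrec.beq.comp ((list_getD 1).comp snd (const 0)) (const 0)
    have hBp : Primrec fun z : (Game × List ℕ) × ℕ => decide (z.2 ≤ z.1.1.1) :=
      (nat_le.comp snd (fst.comp (fst.comp fst))).decide
    have hB : Primrec fun y : Game × List ℕ => y.2.all fun v => decide (v ≤ y.1.1) :=
      (list_all_primrec snd hBp.to₂).of_eq fun _ => rfl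
    have hpair : Primrec fun z : (Game × List ℕ) × ℕ =>
        ((z.1.1, z.1.2.getD z.2 0, z.1.2.getD (z.2 + 1) 0) : Game × ℕ × ℕ) :=
      Primrec.pair (fst.comp fst) (Primrec.pair
        ((list_getD 0).comp (snd.comp fst) snd)
        ((list_getD 0).comp (snd.comp fst) (succ.comp snd)))
    have hp : Primrec fun z : (Game × List ℕ) × ℕ =>
        stepB z.1.1 (z.1.2.getD z.2 0) (z.1.2.getD (z.2 + 1) 0) :=
      (hstep.comp hpair).of_eq fun _ => rfl
    have hC : Primrec fun y : Game × List ℕ =>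
        (List.range (y.2.length - 1)).all fun k =>
          stepB y.1 (y.2.getD k 0) (y.2.getD (k + 1) 0) :=
      (list_all_primrec
        (list_range.comp (nat_sub.comp (list_length.comp snd) (const 1)))
        hp.to₂).of_eq fun _ => rfl
    exact (Primrec.and.comp (Primrec.and.comp hA hB) hC).of_eq fun y => rfl
  have hind : Primrec fun y : Game × ℕ × List ℕ × List ℕ =>
      indistB y.1 y.2.1 y.2.2.1 y.2.2.2 := by
    have hA : Primrec fun y : Game × ℕ × List ℕ × List ℕ =>
        (y.2.2.1.length == y.2.2.2.length) :=
      Primrec.beq.comp (list_length.comp (fst.comp (snd.comp snd)))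
        (list_length.comp (snd.comp (snd.comp snd)))
    have hpi1 : Primrec fun z : (Game × ℕ × List ℕ × List ℕ) × ℕ =>
        ((z.1.1, z.1.2.1, z.1.2.2.1.getD (z.2 + 1) 0) : Game × ℕ × ℕ) :=
      Primrec.pair (fst.comp fst) (Primrec.pair (fst.comp (snd.comp fst))
        ((list_getD 0).comp (fst.comp (snd.comp (snd.comp fst))) (succ.comp snd)))
    have hpi2 : Primrec fun z : (Game × ℕ × List ℕ × List ℕ) × ℕ =>
        ((z.1.1, z.1.2.1, z.1.2.2.2.getD (z.2 + 1) 0) : Game × ℕ × ℕ) :=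
      Primrec.pair (fst.comp fst) (Primrec.pair (fst.comp (snd.comp fst))
        ((list_getD 0).comp (snd.comp (snd.comp (snd.comp fst))) (succ.comp snd)))
    have hoA : Primrec fun z : (Game × ℕ × List ℕ × List ℕ) × ℕ =>
        obsB z.1.1 z.1.2.1 (z.1.2.2.1.getD (z.2 + 1) 0) :=
      (hobs.comp hpi1).of_eq fun _ => rfl
    have hoB : Primrec fun z : (Game × ℕ × List ℕ × List ℕ) × ℕ =>
        obsB z.1.1 z.1.2.1 (z.1.2.2.2.getD (z.2 + 1) 0) :=
      (hobs.comp hpi2).of_eq fun _ => rfl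
    have hp : Primrec fun z : (Game × ℕ × List ℕ × List ℕ) × ℕ =>
        (obsB z.1.1 z.1.2.1 (z.1.2.2.1.getD (z.2 + 1) 0) ==
          obsB z.1.1 z.1.2.1 (z.1.2.2.2.getD (z.2 + 1) 0)) :=
      Primrec.beq.comp hoA hoB
    have hB : Primrec fun y : Game × ℕ × List ℕ × List ℕ =>
        (List.range (y.2.2.1.length - 1)).all fun t =>
          (obsB y.1 y.2.1 (y.2.2.1.getD (t + 1) 0) ==
            obsB y.1 y.2.1 (y.2.2.2.getD (t + 1) 0)) :=
      (list_all_primrec (list_range.comp (nat_sub.comp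
        (list_length.comp (fst.comp (snd.comp snd))) (const 1))) hp.to₂).of_eq fun _ => rfl
    exact (Primrec.and.comp hA hB).of_eq fun y => rfl
  have hbody : Primrec fun y : Game × ℕ × ℕ × List ℕ × List ℕ × List ℕ =>
      body y.1 y.2.1 y.2.2.1 y.2.2.2.1 y.2.2.2.2.1 y.2.2.2.2.2 := by
    have hc : Primrec fun y : Game × ℕ × ℕ × List ℕ × List ℕ × List ℕ => y.1 := fst
    have hi : Primrec fun y : Game × ℕ × ℕ × List ℕ × List ℕ × List ℕ => y.2.1 :=
      fst.comp snd
    have hj : Primrec fun y : Game × ℕ × ℕ × List ℕ × List ℕ × List ℕ => y.2.2.1 :=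
      fst.comp (snd.comp snd)
    have hq : Primrec fun y : Game × ℕ × ℕ × List ℕ × List ℕ × List ℕ => y.2.2.2.1 :=
      fst.comp (snd.comp (snd.comp snd))
    have hq1 : Primrec fun y : Game × ℕ × ℕ × List ℕ × List ℕ × List ℕ => y.2.2.2.2.1 :=
      fst.comp (snd.comp (snd.comp (snd.comp snd)))
    have hq2 : Primrec fun y : Game × ℕ × ℕ × List ℕ × List ℕ × List ℕ => y.2.2.2.2.2 :=
      snd.comp (snd.comp (snd.comp (snd.comp snd)))
    have H1 : Primrec fun y : Game × ℕ × ℕ × List ℕ × List ℕ × List ℕ =>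
        histB y.1 y.2.2.2.1 := (hhist.comp (hc.pair hq)).of_eq fun _ => rfl
    have H2 : Primrec fun y : Game × ℕ × ℕ × List ℕ × List ℕ × List ℕ =>
        histB y.1 y.2.2.2.2.1 := (hhist.comp (hc.pair hq1)).of_eq fun _ => rfl
    have H3 : Primrec fun y : Game × ℕ × ℕ × List ℕ × List ℕ × List ℕ =>
        histB y.1 y.2.2.2.2.2 := (hhist.comp (hc.pair hq2)).of_eq fun _ => rfl
    have E1 : Primrec fun y : Game × ℕ × ℕ × List ℕ × List ℕ × List ℕ =>
        indistB y.1 y.2.1 y.2.2.2.1 y.2.2.2.2.1 :=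
      (hind.comp (hc.pair (hi.pair (hq.pair hq1)))).of_eq fun _ => rfl
    have E2 : Primrec fun y : Game × ℕ × ℕ × List ℕ × List ℕ × List ℕ =>
        indistB y.1 y.2.2.1 y.2.2.2.1 y.2.2.2.2.1 :=
      (hind.comp (hc.pair (hj.pair (hq.pair hq1)))).of_eq fun _ => rfl
    have E3 : Primrec fun y : Game × ℕ × ℕ × List ℕ × List ℕ × List ℕ =>
        indistB y.1 y.2.2.1 y.2.2.2.1 y.2.2.2.2.2 :=
      (hind.comp (hc.pair (hj.pair (hq.pair hq2)))).of_eq fun _ => rfl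
    have E4 : Primrec fun y : Game × ℕ × ℕ × List ℕ × List ℕ × List ℕ =>
        indistB y.1 y.2.1 y.2.2.2.1 y.2.2.2.2.2 :=
      (hind.comp (hc.pair (hi.pair (hq.pair hq2)))).of_eq fun _ => rfl
    exact (Primrec.not.comp (Primrec.and.comp (Primrec.and.comp (Primrec.and.comp
      (Primrec.and.comp (Primrec.and.comp (Primrec.and.comp H1 H2) H3) E1)
      (Primrec.not.comp E2)) E3) (Primrec.not.comp E4))).of_eq fun y => rfl
  have c6 : Primrec fun x : (((((Game × ℕ) × ℕ) × ℕ) × List ℕ) × List ℕ) × List ℕ =>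
      x.1.1.1.1.1.1 := fst.comp (fst.comp (fst.comp (fst.comp (fst.comp fst))))
  have i6 : Primrec fun x : (((((Game × ℕ) × ℕ) × ℕ) × List ℕ) × List ℕ) × List ℕ =>
      x.1.1.1.1.2 := snd.comp (fst.comp (fst.comp (fst.comp fst)))
  have j6 : Primrec fun x : (((((Game × ℕ) × ℕ) × ℕ) × List ℕ) × List ℕ) × List ℕ =>
      x.1.1.1.2 := snd.comp (fst.comp (fst.comp fst))
  have p6 : Primrec fun x : (((((Game × ℕ) × ℕ) × ℕ) × List ℕ) × List ℕ) × List ℕ =>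
      x.1.1.2 := snd.comp (fst.comp fst)
  have p16 : Primrec fun x : (((((Game × ℕ) × ℕ) × ℕ) × List ℕ) × List ℕ) × List ℕ =>
      x.1.2 := snd.comp fst
  have p26 : Primrec fun x : (((((Game × ℕ) × ℕ) × ℕ) × List ℕ) × List ℕ) × List ℕ =>
      x.2 := snd
  have h6 : Primrec fun x : (((((Game × ℕ) × ℕ) × ℕ) × List ℕ) × List ℕ) × List ℕ =>
      body x.1.1.1.1.1.1 x.1.1.1.1.2 x.1.1.1.2 x.1.1.2 x.1.2 x.2 :=
    (hbody.comp (c6.pair (i6.pair (j6.pair (p6.pair (p16.pair p26)))))).of_eq fun _ => rfl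
  have tup5 : Primrec fun x : ((((Game × ℕ) × ℕ) × ℕ) × List ℕ) × List ℕ =>
      tuples (x.1.1.1.1.1.1 + 1) x.1.1.1.1.2 :=
    (tuples_primrec.comp
      (succ.comp (fst.comp (fst.comp (fst.comp (fst.comp (fst.comp fst))))))
      (snd.comp (fst.comp (fst.comp (fst.comp fst))))).of_eq fun _ => rfl
  have h5 : Primrec fun x : ((((Game × ℕ) × ℕ) × ℕ) × List ℕ) × List ℕ =>
      (tuples (x.1.1.1.1.1.1 + 1) x.1.1.1.1.2).all fun p2 =>
        body x.1.1.1.1.1 x.1.1.1.2 x.1.1.2 x.1.2 x.2 p2 :=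
    (list_all_primrec tup5 h6.to₂).of_eq fun _ => rfl
  have tup4 : Primrec fun x : (((Game × ℕ) × ℕ) × ℕ) × List ℕ =>
      tuples (x.1.1.1.1.1 + 1) x.1.1.1.2 :=
    (tuples_primrec.comp
      (succ.comp (fst.comp (fst.comp (fst.comp (fst.comp fst)))))
      (snd.comp (fst.comp (fst.comp fst)))).of_eq fun _ => rfl
  have h4 : Primrec fun x : (((Game × ℕ) × ℕ) × ℕ) × List ℕ =>
      (tuples (x.1.1.1.1.1 + 1) x.1.1.1.2).all fun p1 =>
        (tuples (x.1.1.1.1.1 + 1) x.1.1.1.2).all fun p2 =>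
          body x.1.1.1.1 x.1.1.2 x.1.2 x.2 p1 p2 :=
    (list_all_primrec tup4 h5.to₂).of_eq fun _ => rfl
  have tup3 : Primrec fun x : ((Game × ℕ) × ℕ) × ℕ => tuples (x.1.1.1.1 + 1) x.1.1.2 :=
    (tuples_primrec.comp (succ.comp (fst.comp (fst.comp (fst.comp fst))))
      (snd.comp (fst.comp fst))).of_eq fun _ => rfl
  have h3 : Primrec fun x : ((Game × ℕ) × ℕ) × ℕ =>
      (tuples (x.1.1.1.1 + 1) x.1.1.2).all fun p =>
        (tuples (x.1.1.1.1 + 1) x.1.1.2).all fun p1 =>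
          (tuples (x.1.1.1.1 + 1) x.1.1.2).all fun p2 =>
            body x.1.1.1 x.1.2 x.2 p p1 p2 :=
    (list_all_primrec tup3 h4.to₂).of_eq fun _ => rfl
  have rng2 : Primrec fun x : (Game × ℕ) × ℕ => List.range x.1.1.2.2.length :=
    (list_range.comp (list_length.comp (snd.comp (snd.comp (fst.comp fst))))).of_eq
      fun _ => rfl
  have h2 : Primrec fun x : (Game × ℕ) × ℕ =>
      (List.range x.1.1.2.2.length).all fun j =>
        (tuples (x.1.1.1 + 1) x.1.2).all fun p =>
          (tuples (x.1.1.1 + 1) x.1.2).all fun p1 =>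
            (tuples (x.1.1.1 + 1) x.1.2).all fun p2 =>
              body x.1.1 x.2 j p p1 p2 :=
    (list_all_primrec rng2 h3.to₂).of_eq fun _ => rfl
  have rng1 : Primrec fun x : Game × ℕ => List.range x.1.2.2.length :=
    (list_range.comp (list_length.comp (snd.comp (snd.comp fst)))).of_eq fun _ => rfl
  have h1 : Primrec fun x : Game × ℕ =>
      (List.range x.1.2.2.length).all fun i =>
        (List.range x.1.2.2.length).all fun j =>
          (tuples (x.1.1 + 1) x.2).all fun p =>
            (tuples (x.1.1 + 1) x.2).all fun p1 =>
              (tuples (x.1.1 + 1) x.2).all fun p2 =>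
                body x.1 i j p p1 p2 :=
    (list_all_primrec rng1 h2.to₂).of_eq fun _ => rfl
  have hbnd : Primrec fun c : Game => bnd c := by
    have s : Primrec fun c : Game => c.1 + 1 := succ.comp fst
    exact (nat_mul.comp (nat_mul.comp (nat_mul.comp (const 4) s) s) s).of_eq fun c => rfl
  have h0 : Primrec fun c : Game =>
      (List.range (bnd c + 1)).all fun l =>
        (List.range c.2.2.length).all fun i =>
          (List.range c.2.2.length).all fun j =>
            (tuples (c.1 + 1) l).all fun p =>
              (tuples (c.1 + 1) l).all fun p1 =>
                (tuples (c.1 + 1) l).all fun p2 => body c i j p p1 p2 :=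
    (list_all_primrec (list_range.comp (succ.comp hbnd)) h1.to₂).of_eq fun _ => rfl
  exact h0.of_eq fun c => rfl

/-! ### Semantics of the checker pieces -/

theorem obsB_eq (c : Game) (i v : ℕ) : obsB c i v = obsOf c i v := rfl

theorem stepB_iff (c : Game) (u w : ℕ) : stepB c u w = true ↔ Step c u w := by
  simp only [stepB, List.any_eq_true, Bool.and_eq_true, beq_iff_eq]
  constructor
  · rintro ⟨m, hm, h1, h2⟩
    exact ⟨m.2.1, by rwa [Move, ← h1, ← h2]⟩
  · rintro ⟨a, ha⟩
    exact ⟨(u, a, w), ha, rfl, rfl⟩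

theorem mem_tuples {b ℓ : ℕ} {l : List ℕ} :
    l ∈ tuples b ℓ ↔ l.length = ℓ ∧ ∀ v ∈ l, v < b := by
  induction ℓ generalizing l with
  | zero =>
    simp only [tuples, List.mem_singleton]
    constructor
    · rintro rfl; simp
    · rintro ⟨h, -⟩; exact List.length_eq_zero_iff.1 h
  | succ n ih =>
    simp only [tuples, List.mem_flatMap, List.mem_map, List.mem_range]
    constructor
    · rintro ⟨v, hv, l', hl', rfl⟩
      obtain ⟨h1, h2⟩ := ih.1 hl'
      refine ⟨by simp [h1], ?_⟩
      intro x hx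
      rcases List.mem_cons.1 hx with rfl | hx
      · exact hv
      · exact h2 x hx
    · rintro ⟨hlen, hmem⟩
      cases l with
      | nil => simp at hlen
      | cons v l' =>
        exact ⟨v, hmem v (.head _), l',
          ih.2 ⟨by simpa using hlen, fun x hx => hmem x (.tail _ hx)⟩, rfl⟩

theorem chain'_getD {R : ℕ → ℕ → Prop} {l : List ℕ} :
    l.Chain' R ↔ ∀ k, k + 1 < l.length → R (l.getD k 0) (l.getD (k + 1) 0) := by
  show List.IsChain R l ↔ _
  rw [List.isChain_iff_getElem]
  constructor
  · intro h k hk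
    rw [List.getD_eq_getElem l 0 (by omega), List.getD_eq_getElem l 0 hk]
    simpa [List.get_eq_getElem] using h k (by omega)
  · intro h k hk
    have h2 : k + 1 < l.length := by omega
    have := h k h2
    rw [List.getD_eq_getElem l 0 (by omega), List.getD_eq_getElem l 0 h2] at this
    simpa [List.get_eq_getElem] using this

theorem head?_iff {l : List ℕ} : l.getD 0 1 = 0 ↔ l.head? = some 0 := by
  cases l <;> simp

theorem histB_iff (c : Game) (l : List ℕ) : histB c l = true ↔ IsHistory c l := by
  simp only [histB, Bool.and_eq_true, beq_iff_eq, List.all_eq_true, decide_eq_true_eq,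
    List.mem_range, IsHistory, numPos, head?_iff, chain'_getD]
  constructor
  · rintro ⟨⟨h0, hmem⟩, hch⟩
    exact ⟨h0, hmem, fun k hk => (stepB_iff c _ _).1 (hch k (by omega))⟩
  · rintro ⟨h0, hmem, hch⟩
    exact ⟨⟨h0, hmem⟩, fun k hk => (stepB_iff c _ _).2 (hch k (by omega))⟩

theorem getD_obsSeq {f : ℕ → ℕ} {l : List ℕ} {t : ℕ} (ht : t + 1 < l.length) :
    ((l.drop 1).map f).getD t 0 = f (l.getD (t + 1) 0) := by
  have h1 : t < ((l.drop 1).map f).length := by simp; omega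
  rw [List.getD_eq_getElem _ 0 h1, List.getD_eq_getElem l 0 ht]
  simp [List.getElem_map, List.getElem_drop, Nat.add_comm]

theorem indist_pointwise {c : Game} {i : ℕ} {l l' : List ℕ} (h : Indist c i l l') {t : ℕ}
    (ht : t + 1 < l.length) (ht' : t + 1 < l'.length) :
    obsOf c i (l.getD (t + 1) 0) = obsOf c i (l'.getD (t + 1) 0) := by
  have := congrArg (fun L => L.getD t 0) h
  simpa only [Indist, obsSeq, getD_obsSeq ht, getD_obsSeq ht'] using this

theorem indist_of_pointwise {c : Game} {i : ℕ} {l l' : List ℕ} (hlen : l.length = l'.length)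
    (h : ∀ t, t + 1 < l.length → obsOf c i (l.getD (t + 1) 0) = obsOf c i (l'.getD (t + 1) 0)) :
    Indist c i l l' := by
  show obsSeq c i l = obsSeq c i l'
  refine List.ext_getElem (by simp [obsSeq, hlen]) fun t h1 h2 => ?_
  simp only [obsSeq, List.length_map, List.length_drop] at h1
  have := h t (by omega)
  rw [List.getD_eq_getElem l 0 (by omega), List.getD_eq_getElem l' 0 (by omega)] at this
  simp only [obsSeq, List.getElem_map, List.getElem_drop]
  simpa [Nat.add_comm] using this

theorem indistB_iff (c : Game) (i : ℕ) (l l' : List ℕ) (h : l.length = l'.length) :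
    indistB c i l l' = true ↔ Indist c i l l' := by
  simp only [indistB, Bool.and_eq_true, beq_iff_eq, List.all_eq_true, List.mem_range]
  constructor
  · rintro ⟨-, hall⟩
    exact indist_of_pointwise h fun t ht => by
      simpa [obsB_eq] using hall t (by omega)
  · intro hind
    exact ⟨h, fun t ht => by
      simpa [obsB_eq] using indist_pointwise hind (t := t) (by omega) (by omega)⟩

/-! ### Bad triples -/

/-- A bad triple of histories witnessing failure of hierarchical information. -/
def BadT (c : Game) (i j : ℕ) (p p1 p2 : List ℕ) : Prop :=
  IsHistory c p ∧ IsHistory c p1 ∧ IsHistory c p2 ∧ Indist c i p p1 ∧ ¬Indist c j p p1 ∧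
    Indist c j p p2 ∧ ¬Indist c i p p2

theorem dynamicHI_iff_no_badT (c : Game) :
    DynamicHI c ↔ ∀ i < numPlayers c, ∀ j < numPlayers c, ∀ p p1 p2, ¬BadT c i j p p1 p2 := by
  constructor
  · rintro hd i hi j hj p p1 p2 ⟨hp, hp1, hp2, he1, hd1, he2, hd2⟩
    rcases hd p hp i hi j hj with hsub | hsub
    · exact hd1 (hsub (show p1 ∈ InfoSet c i p from ⟨hp1, he1⟩)).2
    · exact hd2 (hsub (show p2 ∈ InfoSet c j p from ⟨hp2, he2⟩)).2
  · intro hno p hp i hi j hj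
    by_contra hcon
    push_neg at hcon
    obtain ⟨h1, h2⟩ := hcon
    obtain ⟨p1, hp1mem, hp1not⟩ := Set.not_subset.1 h1
    obtain ⟨p2, hp2mem, hp2not⟩ := Set.not_subset.1 h2
    obtain ⟨hp1h, hp1i⟩ := hp1mem
    obtain ⟨hp2h, hp2j⟩ := hp2mem
    exact hno i hi j hj p p1 p2 ⟨hp, hp1h, hp2h, hp1i, fun hj' => hp1not ⟨hp1h, hj'⟩,
      hp2j, fun hi' => hp2not ⟨hp2h, hi'⟩⟩

/-- Function version of a bad triple of histories. -/
structure FB (c : Game) (i j ℓ : ℕ) (p p1 p2 : ℕ → ℕ) : Prop where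
  h0 : p 0 = 0
  h10 : p1 0 = 0
  h20 : p2 0 = 0
  hb : ∀ t < ℓ, p t ≤ c.1 ∧ p1 t ≤ c.1 ∧ p2 t ≤ c.1
  hs : ∀ t, t + 1 < ℓ →
    Step c (p t) (p (t + 1)) ∧ Step c (p1 t) (p1 (t + 1)) ∧ Step c (p2 t) (p2 (t + 1))
  e1 : ∀ t, 0 < t → t < ℓ → obsOf c i (p t) = obsOf c i (p1 t)
  d1 : ∃ t, 0 < t ∧ t < ℓ ∧ obsOf c j (p t) ≠ obsOf c j (p1 t)
  e2 : ∀ t, 0 < t → t < ℓ → obsOf c j (p t) = obsOf c j (p2 t)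
  d2 : ∃ t, 0 < t ∧ t < ℓ ∧ obsOf c i (p t) ≠ obsOf c i (p2 t)

theorem indist_length {c : Game} {i : ℕ} {p p' : List ℕ} (h : Indist c i p p')
    (hp : p ≠ []) (hp' : p' ≠ []) : p.length = p'.length := by
  have := congrArg List.length h
  simp only [obsSeq, List.length_map, List.length_drop] at this
  have h1 : 0 < p.length := List.length_pos_iff.2 hp
  have h2 : 0 < p'.length := List.length_pos_iff.2 hp'
  omega

theorem ne_nil_of_hist {c : Game} {p : List ℕ} (h : IsHistory c p) : p ≠ [] := by
  rintro rfl; simp [IsHistory] at h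

theorem getD_le {l : List ℕ} {N t : ℕ} (hm : ∀ v ∈ l, v ≤ N) (ht : t < l.length) :
    l.getD t 0 ≤ N := by
  rw [List.getD_eq_getElem l 0 ht]; exact hm _ (List.getElem_mem ht)

theorem not_indist_exists {c : Game} {i : ℕ} {l l' : List ℕ} (hlen : l.length = l'.length)
    (h : ¬Indist c i l l') :
    ∃ t, 0 < t ∧ t < l.length ∧ obsOf c i (l.getD t 0) ≠ obsOf c i (l'.getD t 0) := by
  by_contra hcon
  push_neg at hcon
  exact h (indist_of_pointwise hlen fun t ht => hcon (t + 1) (by omega) (by omega))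

theorem fb_of_badT {c : Game} {i j : ℕ} {p p1 p2 : List ℕ} (h : BadT c i j p p1 p2) :
    FB c i j p.length (fun t => p.getD t 0) (fun t => p1.getD t 0) (fun t => p2.getD t 0) := by
  obtain ⟨hp, hp1, hp2, he1, hd1, he2, hd2⟩ := h
  have hl1 : p.length = p1.length := indist_length he1 (ne_nil_of_hist hp) (ne_nil_of_hist hp1)
  have hl2 : p.length = p2.length := indist_length he2 (ne_nil_of_hist hp) (ne_nil_of_hist hp2)
  obtain ⟨hph, hpm, hpc⟩ := hp
  obtain ⟨hp1h, hp1m, hp1c⟩ := hp1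
  obtain ⟨hp2h, hp2m, hp2c⟩ := hp2
  have head0 : ∀ l : List ℕ, l.head? = some 0 → l.getD 0 0 = 0 := by
    intro l hl; cases l with
    | nil => simp at hl
    | cons a l => simpa using hl
  refine ⟨head0 p hph, head0 p1 hp1h, head0 p2 hp2h, ?_, ?_, ?_, ?_, ?_, ?_⟩
  · exact fun t ht => ⟨getD_le hpm ht, getD_le hp1m (by omega), getD_le hp2m (by omega)⟩
  · exact fun t ht => ⟨chain'_getD.1 hpc t ht, chain'_getD.1 hp1c t (by omega),
      chain'_getD.1 hp2c t (by omega)⟩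
  · intro t ht0 htl
    obtain ⟨s, rfl⟩ : ∃ s, t = s + 1 := ⟨t - 1, by omega⟩
    exact indist_pointwise he1 (by omega) (by omega)
  · exact not_indist_exists hl1 hd1
  · intro t ht0 htl
    obtain ⟨s, rfl⟩ : ∃ s, t = s + 1 := ⟨t - 1, by omega⟩
    exact indist_pointwise he2 (by omega) (by omega)
  · exact not_indist_exists hl2 hd2

theorem getD_range_map {p : ℕ → ℕ} {ℓ t : ℕ} (ht : t < ℓ) :
    ((List.range ℓ).map p).getD t 0 = p t := by
  rw [List.getD_eq_getElem _ 0 (by simpa using ht)]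
  simp

theorem fb_pos {c : Game} {i j ℓ : ℕ} {p p1 p2 : ℕ → ℕ} (h : FB c i j ℓ p p1 p2) : 0 < ℓ := by
  obtain ⟨t, ht0, htl, -⟩ := h.d1; omega

theorem badT_of_fb {c : Game} {i j ℓ : ℕ} {p p1 p2 : ℕ → ℕ} (h : FB c i j ℓ p p1 p2) :
    BadT c i j ((List.range ℓ).map p) ((List.range ℓ).map p1) ((List.range ℓ).map p2) := by
  have hpos : 0 < ℓ := fb_pos h
  have hlen : ∀ q : ℕ → ℕ, ((List.range ℓ).map q).length = ℓ := by simp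
  have hist : ∀ q : ℕ → ℕ, q 0 = 0 → (∀ t < ℓ, q t ≤ c.1) →
      (∀ t, t + 1 < ℓ → Step c (q t) (q (t + 1))) → IsHistory c ((List.range ℓ).map q) := by
    intro q h0 hb hs
    refine ⟨?_, ?_, ?_⟩
    · rw [List.head?_eq_getElem?, List.getElem?_eq_getElem (by simpa using hpos)]
      simp [h0]
    · intro v hv
      obtain ⟨t, ht, rfl⟩ := List.mem_map.1 hv
      exact hb t (List.mem_range.1 ht)
    · refine chain'_getD.2 fun k hk => ?_
      rw [hlen] at hk
      rw [getD_range_map (by omega), getD_range_map hk]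
      exact hs k hk
  have hind : ∀ (m : ℕ) (q q' : ℕ → ℕ), (∀ t, 0 < t → t < ℓ →
      obsOf c m (q t) = obsOf c m (q' t)) →
      Indist c m ((List.range ℓ).map q) ((List.range ℓ).map q') := by
    intro m q q' he
    refine indist_of_pointwise (by simp) fun t ht => ?_
    rw [hlen] at ht
    rw [getD_range_map (by omega), getD_range_map ht]
    exact he (t + 1) (by omega) ht
  have hnind : ∀ (m : ℕ) (q q' : ℕ → ℕ),
      (∃ t, 0 < t ∧ t < ℓ ∧ obsOf c m (q t) ≠ obsOf c m (q' t)) →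
      ¬Indist c m ((List.range ℓ).map q) ((List.range ℓ).map q') := by
    rintro m q q' ⟨t, ht0, htl, hne⟩ hind
    obtain ⟨s, rfl⟩ : ∃ s, t = s + 1 := ⟨t - 1, by omega⟩
    have := indist_pointwise hind (t := s) (by rw [hlen]; omega) (by rw [hlen]; omega)
    rw [getD_range_map htl, getD_range_map htl] at this
    exact hne this
  exact ⟨hist p h.h0 (fun t ht => (h.hb t ht).1) (fun t ht => (h.hs t ht).1),
    hist p1 h.h10 (fun t ht => (h.hb t ht).2.1) (fun t ht => (h.hs t ht).2.1),
    hist p2 h.h20 (fun t ht => (h.hb t ht).2.2) (fun t ht => (h.hs t ht).2.2),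
    hind i p p1 h.e1, hnind j p p1 h.d1, hind j p p2 h.e2, hnind i p p2 h.d2⟩

theorem fb_cut {c : Game} {i j ℓ : ℕ} {p p1 p2 : ℕ → ℕ} (h : FB c i j ℓ p p1 p2)
    {k k' : ℕ} (hkk : k < k') (hk' : k' < ℓ)
    (ep : p k = p k') (ep1 : p1 k = p1 k') (ep2 : p2 k = p2 k')
    (ef1 : (∃ s, 0 < s ∧ s ≤ k ∧ obsOf c j (p s) ≠ obsOf c j (p1 s)) ↔
      (∃ s, 0 < s ∧ s ≤ k' ∧ obsOf c j (p s) ≠ obsOf c j (p1 s)))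
    (ef2 : (∃ s, 0 < s ∧ s ≤ k ∧ obsOf c i (p s) ≠ obsOf c i (p2 s)) ↔
      (∃ s, 0 < s ∧ s ≤ k' ∧ obsOf c i (p s) ≠ obsOf c i (p2 s))) :
    ∃ ℓ' < ℓ, ∃ q q1 q2, FB c i j ℓ' q q1 q2 := by
  set d := k' - k with hd
  have hd0 : 0 < d := by omega
  refine ⟨ℓ - d, by omega, (fun m => if m ≤ k then p m else p (m + d)),
    (fun m => if m ≤ k then p1 m else p1 (m + d)),
    (fun m => if m ≤ k then p2 m else p2 (m + d)), ?_, ?_, ?_, ?_, ?_, ?_, ?_, ?_, ?_⟩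
  · simp [h.h0]
  · simp [h.h10]
  · simp [h.h20]
  · intro t ht
    by_cases htk : t ≤ k <;> simp only [if_pos, if_neg, htk, ite_true, ite_false] <;>
      exact h.hb _ (by omega)
  · have key : ∀ r : ℕ → ℕ, r k = r k' → (∀ s, s + 1 < ℓ → Step c (r s) (r (s + 1))) →
        ∀ t, t + 1 < ℓ - d → Step c (if t ≤ k then r t else r (t + d))
          (if t + 1 ≤ k then r (t + 1) else r (t + 1 + d)) := by
      intro r hr hstep t ht
      rcases Nat.lt_trichotomy t k with htk | rfl | htk
      · rw [if_pos (by omega), if_pos (by omega)]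
        exact hstep t (by omega)
      · rw [if_pos le_rfl, if_neg (by omega), hr, show t + 1 + d = k' + 1 by omega]
        exact hstep k' (by omega)
      · rw [if_neg (by omega), if_neg (by omega), show t + 1 + d = t + d + 1 by omega]
        exact hstep (t + d) (by omega)
    exact fun t ht => ⟨key p ep (fun s hs => (h.hs s hs).1) t ht,
      key p1 ep1 (fun s hs => (h.hs s hs).2.1) t ht,
      key p2 ep2 (fun s hs => (h.hs s hs).2.2) t ht⟩
  · intro t ht0 htl
    by_cases htk : t ≤ k <;> simp only [htk, ite_true, ite_false] <;>
      exact h.e1 _ (by omega) (by omega)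
  · obtain ⟨t0, ht00, ht0l, hne⟩ := h.d1
    by_cases hc : ∃ s, 0 < s ∧ s ≤ k ∧ obsOf c j (p s) ≠ obsOf c j (p1 s)
    · obtain ⟨s, hs0, hsk, hse⟩ := hc
      refine ⟨s, hs0, by omega, ?_⟩
      simpa only [if_pos hsk] using hse
    · have ht0k' : k' < t0 := by
        by_contra hle
        push_neg at hle
        rcases Nat.lt_or_ge k t0 with hgt | hle2
        · exact hc (ef1.2 ⟨t0, ht00, hle, hne⟩)
        · exact hc ⟨t0, ht00, hle2, hne⟩
      refine ⟨t0 - d, by omega, by omega, ?_⟩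
      rw [if_neg (by omega : ¬t0 - d ≤ k), if_neg (by omega : ¬t0 - d ≤ k),
        show t0 - d + d = t0 by omega]
      exact hne
  · intro t ht0 htl
    by_cases htk : t ≤ k <;> simp only [htk, ite_true, ite_false] <;>
      exact h.e2 _ (by omega) (by omega)
  · obtain ⟨t0, ht00, ht0l, hne⟩ := h.d2
    by_cases hc : ∃ s, 0 < s ∧ s ≤ k ∧ obsOf c i (p s) ≠ obsOf c i (p2 s)
    · obtain ⟨s, hs0, hsk, hse⟩ := hc
      refine ⟨s, hs0, by omega, ?_⟩
      simpa only [if_pos hsk] using hse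
    · have ht0k' : k' < t0 := by
        by_contra hle
        push_neg at hle
        rcases Nat.lt_or_ge k t0 with hgt | hle2
        · exact hc (ef2.2 ⟨t0, ht00, hle, hne⟩)
        · exact hc ⟨t0, ht00, hle2, hne⟩
      refine ⟨t0 - d, by omega, by omega, ?_⟩
      rw [if_neg (by omega : ¬t0 - d ≤ k), if_neg (by omega : ¬t0 - d ≤ k),
        show t0 - d + d = t0 by omega]
      exact hne

theorem fb_shrink {c : Game} {i j ℓ : ℕ} {p p1 p2 : ℕ → ℕ} (h : FB c i j ℓ p p1 p2)
    (hl : bnd c < ℓ) : ∃ ℓ' < ℓ, ∃ q q1 q2, FB c i j ℓ' q q1 q2 := by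
  classical
  set N := c.1 with hN
  have hbF : ∀ t : Fin ℓ, p t.val ≤ N ∧ p1 t.val ≤ N ∧ p2 t.val ≤ N := fun t => h.hb t.val t.2
  set F : Fin ℓ → Fin (N + 1) × Fin (N + 1) × Fin (N + 1) × Bool × Bool := fun t =>
    (⟨p t.val, by have := (hbF t).1; omega⟩, ⟨p1 t.val, by have := (hbF t).2.1; omega⟩,
      ⟨p2 t.val, by have := (hbF t).2.2; omega⟩,
      decide (∃ s, 0 < s ∧ s ≤ t.val ∧ obsOf c j (p s) ≠ obsOf c j (p1 s)),
      decide (∃ s, 0 < s ∧ s ≤ t.val ∧ obsOf c i (p s) ≠ obsOf c i (p2 s))) with hF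
  have hcard : Fintype.card (Fin (N + 1) × Fin (N + 1) × Fin (N + 1) × Bool × Bool) <
      Fintype.card (Fin ℓ) := by
    simp only [Fintype.card_prod, Fintype.card_fin, Fintype.card_bool]
    have : (N + 1) * ((N + 1) * ((N + 1) * (2 * 2))) = bnd c := by rw [bnd, ← hN]; ring
    omega
  obtain ⟨a, b, hab, hFab⟩ := Fintype.exists_ne_map_eq_of_card_lt F hcard
  have main : ∀ a b : Fin ℓ, a < b → F a = F b → ∃ ℓ' < ℓ, ∃ q q1 q2, FB c i j ℓ' q q1 q2 := by
    intro a b hlt hFeq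
    rw [hF] at hFeq
    simp only [Prod.mk.injEq, Fin.mk.injEq, decide_eq_decide] at hFeq
    obtain ⟨e1, e2, e3, e4, e5⟩ := hFeq
    exact fb_cut h hlt b.2 e1 e2 e3 e4 e5
  rcases hab.lt_or_gt with hlt | hlt
  · exact main a b hlt hFab
  · exact main b a hlt hFab.symm

theorem fb_bound {c : Game} {i j ℓ : ℕ} {p p1 p2 : ℕ → ℕ} (h : FB c i j ℓ p p1 p2) :
    ∃ ℓ' ≤ bnd c, ∃ q q1 q2, FB c i j ℓ' q q1 q2 := by
  induction ℓ using Nat.strong_induction_on generalizing p p1 p2 with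
  | _ ℓ ih =>
    rcases le_or_gt ℓ (bnd c) with hle | hlt
    · exact ⟨ℓ, hle, p, p1, p2, h⟩
    · obtain ⟨ℓ', hℓ', q, q1, q2, hq⟩ := fb_shrink h hlt
      exact ih ℓ' hℓ' hq

/-! ### Main equivalence -/

theorem body_iff (c : Game) (i j : ℕ) (p p1 p2 : List ℕ) (h1 : p.length = p1.length)
    (h2 : p.length = p2.length) : body c i j p p1 p2 = true ↔ ¬BadT c i j p p1 p2 := by
  rw [body, Bool.not_eq_true', ← Bool.not_eq_true, not_iff_not]
  simp only [Bool.and_eq_true, Bool.not_eq_true', ← Bool.not_eq_true, histB_iff,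
    indistB_iff c i p p1 h1, indistB_iff c j p p1 h1, indistB_iff c j p p2 h2,
    indistB_iff c i p p2 h2, BadT, and_assoc]

theorem check_iff (c : Game) : check c = true ↔ DynamicHI c := by
  have hnp : numPlayers c = (c.2.2).length := rfl
  rw [dynamicHI_iff_no_badT, hnp]
  simp only [check, List.all_eq_true, List.mem_range, Nat.lt_succ_iff]
  constructor
  · intro hc i hi j hj p p1 p2 hbad
    obtain ⟨ℓ', hℓ', q, q1, q2, hq⟩ := fb_bound (fb_of_badT hbad)
    have hbad' := badT_of_fb hq
    have hmem : ∀ r : ℕ → ℕ, (∀ t < ℓ', r t ≤ c.1) →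
        (List.range ℓ').map r ∈ tuples (c.1 + 1) ℓ' := by
      intro r hr
      refine mem_tuples.2 ⟨by simp, fun v hv => ?_⟩
      obtain ⟨t, ht, rfl⟩ := List.mem_map.1 hv
      exact Nat.lt_succ_of_le (hr t (List.mem_range.1 ht))
    have hb := hc ℓ' hℓ' i hi j hj _ (hmem q fun t ht => (hq.hb t ht).1)
      _ (hmem q1 fun t ht => (hq.hb t ht).2.1) _ (hmem q2 fun t ht => (hq.hb t ht).2.2)
    exact (body_iff c i j _ _ _ (by simp) (by simp)).1 hb hbad'
  · intro hno ℓ hℓ i hi j hj p hp p1 hp1 p2 hp2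
    rw [body_iff c i j p p1 p2 (by rw [(mem_tuples.1 hp).1, (mem_tuples.1 hp1).1])
      (by rw [(mem_tuples.1 hp).1, (mem_tuples.1 hp2).1])]
    exact hno i hi j hj p p1 p2

end S6

/-- It is decidable, given a finite game graph, whether it yields dynamic
hierarchical information, i.e., whether every history yields hierarchical information. -/
theorem statement6 : ComputablePred (fun c : CG.Game => CG.DynamicHI c) := by
  refine ComputablePred.computable_iff.2 ⟨S6.check, S6.check_primrec.to_comp, ?_⟩
  funext c
  exact propext (S6.check_iff c).symm
end

section
/- Let G be a finite game graph with dynamic hierarchical information. For every player i: (a) the information-rank signal rank^i is information-consistent for player i, i.e., π ∼^i π' implies rank^i(π) = rank^i(π'); (b) there exists a Moore machine with input alphabet B^i that outputs rank^i(π) on input β^i(π) for every history π; and (c) for every player j, the relative-order signal ⪯^i_j (with ⪯^i_j(π) = 1 iff P^i(π) ⊆ P^j(π)) is likewise information-consistent for player i and is implemented by a Moore machine with input alphabet B^i reading β^i(π). -/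
section Aux

namespace GameGraph

variable {n : ℕ} {V : Type} {A B : Fin n → Type}

lemma hist_ne_nil {G : GameGraph n V A B} {π : List V} (h : G.IsHistory π) : π ≠ [] := by
  intro hnil; rw [hnil] at h; simp [GameGraph.IsHistory] at h

lemma obsSeq_length (G : GameGraph n V A B) (i : Fin n) (π : List V) :
    (G.obsSeq i π).length = π.length - 1 := by
  simp [GameGraph.obsSeq]

lemma length_eq_of_indist {G : GameGraph n V A B} {i : Fin n} {π π' : List V}
    (h : G.IsHistory π) (h' : G.IsHistory π') (hi : G.Indist i π π') :
    π.length = π'.length := by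
  have h1 : (G.obsSeq i π).length = (G.obsSeq i π').length := by rw [hi]
  rw [obsSeq_length, obsSeq_length] at h1
  have h2 : 0 < π.length := List.length_pos_iff.2 (hist_ne_nil h)
  have h3 : 0 < π'.length := List.length_pos_iff.2 (hist_ne_nil h')
  omega

lemma indist_refl (G : GameGraph n V A B) (i : Fin n) (π : List V) : G.Indist i π π := rfl

lemma indist_symm {G : GameGraph n V A B} {i : Fin n} {π π' : List V}
    (h : G.Indist i π π') : G.Indist i π' π := h.symm

lemma indist_trans {G : GameGraph n V A B} {i : Fin n} {π π' π'' : List V}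
    (h : G.Indist i π π') (h' : G.Indist i π' π'') : G.Indist i π π'' := h.trans h'

lemma mem_infoSet_self {G : GameGraph n V A B} {i : Fin n} {π : List V}
    (h : G.IsHistory π) : π ∈ G.InfoSet i π := ⟨h, rfl⟩

lemma mem_infoSet {G : GameGraph n V A B} {i : Fin n} {π π' : List V} :
    π' ∈ G.InfoSet i π ↔ G.IsHistory π' ∧ G.Indist i π π' := Iff.rfl

lemma infoSet_eq_of_indist {G : GameGraph n V A B} {i : Fin n} {π π' : List V}
    (hi : G.Indist i π π') : G.InfoSet i π = G.InfoSet i π' := by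
  ext π''
  exact and_congr_right fun _ => by
    unfold GameGraph.Indist at *
    constructor <;> intro h <;> [rw [← hi]; rw [hi]] <;> exact h

/-- Information-consistency of `infoLE · i j` on the `i`-class. -/
lemma infoLE_left_congr {G : GameGraph n V A B} {i j : Fin n} {π π' : List V}
    (h : G.IsHistory π) (h' : G.IsHistory π') (hi : G.Indist i π π') :
    G.infoLE π i j ↔ G.infoLE π' i j := by
  have key : ∀ {σ σ' : List V}, G.IsHistory σ → G.IsHistory σ' → G.Indist i σ σ' →
      G.infoLE σ i j → G.infoLE σ' i j := by
    intro σ σ' hσ hσ' hσσ' hle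
    have hmem : σ' ∈ G.InfoSet i σ := ⟨hσ', hσσ'⟩
    have hmem' : σ' ∈ G.InfoSet j σ := hle hmem
    have hj : G.Indist j σ σ' := hmem'.2
    unfold GameGraph.infoLE at *
    rw [← infoSet_eq_of_indist hσσ', ← infoSet_eq_of_indist hj]
    exact hle
  exact ⟨key h h' hi, key h' h (indist_symm hi)⟩

/-- Information-consistency of `infoLE · j i` on the `i`-class, under dynamic HI. -/
lemma infoLE_right_congr {G : GameGraph n V A B} (hG : G.DynamicHI) {i j : Fin n}
    {π π' : List V} (h : G.IsHistory π) (h' : G.IsHistory π') (hi : G.Indist i π π') :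
    G.infoLE π j i ↔ G.infoLE π' j i := by
  have key : ∀ {σ σ' : List V}, G.IsHistory σ → G.IsHistory σ' → G.Indist i σ σ' →
      G.infoLE σ j i → G.infoLE σ' j i := by
    intro σ σ' hσ hσ' hσσ' hle
    rcases hG σ' hσ' j i with hc | hc
    · exact hc
    · -- `infoLE σ' i j`, transfer back: `infoLE σ i j`, so classes coincide at σ
      have hij : G.infoLE σ i j := (infoLE_left_congr hσ hσ' hσσ').2 hc
      have heq : G.InfoSet i σ = G.InfoSet j σ := le_antisymm hij hle
      have hmem : σ' ∈ G.InfoSet j σ := by rw [← heq]; exact ⟨hσ', hσσ'⟩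
      have hj : G.Indist j σ σ' := hmem.2
      unfold GameGraph.infoLE at *
      rw [← infoSet_eq_of_indist hσσ', ← infoSet_eq_of_indist hj]
      exact hle
  exact ⟨key h h' hi, key h' h (indist_symm hi)⟩

lemma hist_singleton (G : GameGraph n V A B) : G.IsHistory [G.init] := by
  exact ⟨by simp, List.isChain_singleton _⟩

lemma hist_length_one {G : GameGraph n V A B} {π : List V} (h : G.IsHistory π)
    (hl : π.length ≤ 1) : π = [G.init] := by
  match π, hl with
  | [], _ => exact absurd rfl (hist_ne_nil h)
  | [v], _ =>
    have hv : [v].head? = some G.init := h.1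
    simp_all

lemma hist_snoc {G : GameGraph n V A B} {π : List V} (hne : π ≠ []) (u : V) :
    G.IsHistory (π ++ [u]) ↔ G.IsHistory π ∧ G.step (π.getLastD G.init) u := by
  unfold GameGraph.IsHistory
  unfold List.Chain'
  rw [List.isChain_append]
  constructor
  · rintro ⟨h1, h2, h3, h4⟩
    rw [List.head?_append_of_ne_nil _ hne] at h1
    refine ⟨⟨h1, h2⟩, ?_⟩
    have := h4 (π.getLastD G.init) ?_ u rfl
    · exact this
    · rw [List.getLastD_eq_getLast?]
      cases hlast : π.getLast? with
      | none => exact absurd (List.getLast?_eq_none_iff.1 hlast) hne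
      | some x => simp
  · rintro ⟨⟨h1, h2⟩, h3⟩
    refine ⟨by rw [List.head?_append_of_ne_nil _ hne]; exact h1, h2, by simp, ?_⟩
    intro x hx y hy
    simp at hy
    subst hy
    cases hlast : π.getLast? with
    | none => exact absurd (List.getLast?_eq_none_iff.1 hlast) hne
    | some z =>
      rw [hlast] at hx
      simp at hx
      subst hx
      rw [List.getLastD_eq_getLast?, hlast] at h3
      exact h3

lemma obsSeq_snoc {G : GameGraph n V A B} (j : Fin n) {π : List V} (hne : π ≠ []) (u : V) :
    G.obsSeq j (π ++ [u]) = G.obsSeq j π ++ [G.obs j u] := by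
  unfold GameGraph.obsSeq
  rw [List.drop_append_of_le_length (Nat.one_le_iff_ne_zero.2 (by simpa using hne))]
  simp

lemma snoc_inj {α : Type*} {l m : List α} {a b : α} : l ++ [a] = m ++ [b] ↔ l = m ∧ a = b := by
  constructor
  · intro h
    have h1 := List.append_inj' h rfl
    simpa using h1
  · rintro ⟨rfl, rfl⟩; rfl

end GameGraph

end Aux

section Auto

namespace GameGraph

variable {n : ℕ} {V : Type} {A B : Fin n → Type}

/-- The tracked state type: pairs of end positions with, for each player, a bit
recording whether the two tracked histories are indistinguishable for that player. -/
abbrev AutoState (n : ℕ) (V : Type) : Type := V × V × (Fin n → Bool)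

/-- Transition of the tracking automaton for player `i`. -/
def autoDelta (G : GameGraph n V A B) (i : Fin n)
    (S : Set (AutoState n V)) (b : B i) : Set (AutoState n V) :=
  { x | ∃ y ∈ S, G.step y.1 x.1 ∧ G.step y.2.1 x.2.1 ∧ G.obs i x.1 = b ∧
      ∀ j, (x.2.2 j = true ↔ (y.2.2 j = true ∧ G.obs j x.1 = G.obs j x.2.1)) }

/-- Initial state of the tracking automaton. -/
def autoInit (G : GameGraph n V A B) : Set (AutoState n V) :=
  { x | x.1 = G.init ∧ x.2.1 = G.init ∧ ∀ j, x.2.2 j = true }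

/-- Semantic description of the reachable state after reading `w`. -/
def autoSem (G : GameGraph n V A B) (i : Fin n) (w : List (B i)) : Set (AutoState n V) :=
  { x | ∃ π1 π2, G.IsHistory π1 ∧ G.IsHistory π2 ∧ G.obsSeq i π1 = w ∧
      π1.length = π2.length ∧ π1.getLastD G.init = x.1 ∧ π2.getLastD G.init = x.2.1 ∧
      ∀ j, (x.2.2 j = true ↔ G.obsSeq j π1 = G.obsSeq j π2) }

lemma autoSem_nil (G : GameGraph n V A B) (i : Fin n) :
    G.autoSem i [] = G.autoInit := by
  ext x
  constructor
  · rintro ⟨π1, π2, h1, h2, hobs, hlen, hl1, hl2, hd⟩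
    have hp1 : π1 = [G.init] := by
      apply hist_length_one h1
      have := G.obsSeq_length i π1
      rw [hobs] at this
      have h0 : 0 < π1.length := List.length_pos_iff.2 (hist_ne_nil h1)
      simp at this
      omega
    have hp2 : π2 = [G.init] := by
      apply hist_length_one h2
      rw [← hlen, hp1]
      simp
    subst hp1; subst hp2
    refine ⟨by simpa using hl1.symm, by simpa using hl2.symm, fun j => (hd j).2 rfl⟩
  · rintro ⟨h1, h2, h3⟩
    exact ⟨[G.init], [G.init], G.hist_singleton, G.hist_singleton, rfl, rfl,
      by simpa using h1.symm, by simpa using h2.symm, fun j => ⟨fun _ => rfl, fun _ => h3 j⟩⟩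

lemma autoSem_snoc (G : GameGraph n V A B) (i : Fin n) (w : List (B i)) (b : B i) :
    G.autoDelta i (G.autoSem i w) b = G.autoSem i (w ++ [b]) := by
  classical
  ext x
  constructor
  · rintro ⟨y, ⟨π1, π2, h1, h2, hobs, hlen, hl1, hl2, hd⟩, hs1, hs2, hb, hdx⟩
    have hne1 := hist_ne_nil h1
    have hne2 := hist_ne_nil h2
    refine ⟨π1 ++ [x.1], π2 ++ [x.2.1], ?_, ?_, ?_, by simp [hlen], by simp, by simp, ?_⟩
    · exact (hist_snoc hne1 x.1).2 ⟨h1, by rw [hl1]; exact hs1⟩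
    · exact (hist_snoc hne2 x.2.1).2 ⟨h2, by rw [hl2]; exact hs2⟩
    · rw [G.obsSeq_snoc i hne1, hobs, hb]
    · intro j
      rw [hdx j, hd j, G.obsSeq_snoc j hne1, G.obsSeq_snoc j hne2, snoc_inj]
  · rintro ⟨σ1, σ2, h1, h2, hobs, hlen, hl1, hl2, hd⟩
    have hlen1 : σ1.length = w.length + 2 := by
      have := G.obsSeq_length i σ1
      rw [hobs] at this
      have h0 : 0 < σ1.length := List.length_pos_iff.2 (hist_ne_nil h1)
      simp at this
      omega
    -- decompose σ1 and σ2 as snocs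
    obtain ⟨π1, u, rfl⟩ : ∃ π1 u, σ1 = π1 ++ [u] := by
      rcases List.eq_nil_or_concat σ1 with h | ⟨l, a, rfl⟩
      · exact absurd h (hist_ne_nil h1)
      · exact ⟨l, a, by simp⟩
    obtain ⟨π2, v, rfl⟩ : ∃ π2 v, σ2 = π2 ++ [v] := by
      rcases List.eq_nil_or_concat σ2 with h | ⟨l, a, rfl⟩
      · exact absurd h (hist_ne_nil h2)
      · exact ⟨l, a, by simp⟩
    have hne1 : π1 ≠ [] := by
      intro h; rw [h] at hlen1; simp at hlen1
    have hne2 : π2 ≠ [] := by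
      intro h; rw [h] at hlen; rw [hlen1] at hlen; simp at hlen
    obtain ⟨hh1, hst1⟩ := (hist_snoc hne1 u).1 h1
    obtain ⟨hh2, hst2⟩ := (hist_snoc hne2 v).1 h2
    rw [G.obsSeq_snoc i hne1] at hobs
    obtain ⟨hobs1, hbu⟩ := snoc_inj.1 hobs
    have hu : u = x.1 := by simpa using hl1
    have hv : v = x.2.1 := by simpa using hl2
    subst hu; subst hv
    refine ⟨(π1.getLastD G.init, π2.getLastD G.init,
        fun j => decide (G.obsSeq j π1 = G.obsSeq j π2)),
      ⟨π1, π2, hh1, hh2, hobs1, by simpa using hlen, rfl, rfl, fun j => by simp⟩,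
      hst1, hst2, hbu, ?_⟩
    intro j
    rw [hd j, G.obsSeq_snoc j hne1, G.obsSeq_snoc j hne2, snoc_inj]
    simp

lemma autoSem_foldl (G : GameGraph n V A B) (i : Fin n) (w : List (B i)) :
    w.foldl (G.autoDelta i) G.autoInit = G.autoSem i w := by
  induction w using List.reverseRecOn with
  | nil => exact (G.autoSem_nil i).symm
  | append_singleton w b ih =>
    rw [List.foldl_append, List.foldl_cons, List.foldl_nil, ih, G.autoSem_snoc i w b]

/-- From the reachable state one can read off `infoLE π i j`. -/
lemma autoSem_infoLE_left {G : GameGraph n V A B} {i : Fin n} {π : List V}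
    (h : G.IsHistory π) (j : Fin n) :
    (∀ x ∈ G.autoSem i (G.obsSeq i π), x.2.2 i = true → x.2.2 j = true) ↔ G.infoLE π i j := by
  classical
  constructor
  · intro hQ π'' hπ''
    obtain ⟨h'', hind⟩ := hπ''
    refine ⟨h'', ?_⟩
    have hx : (π.getLastD G.init, π''.getLastD G.init,
        fun k => decide (G.obsSeq k π = G.obsSeq k π'')) ∈ G.autoSem i (G.obsSeq i π) :=
      ⟨π, π'', h, h'', rfl, length_eq_of_indist h h'' hind, rfl, rfl, fun k => by simp⟩
    have := hQ _ hx (by simp [GameGraph.Indist] at hind ⊢; exact hind)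
    simpa [GameGraph.Indist] using this
  · rintro hle x ⟨π1, π2, h1, h2, hobs, hlen, hl1, hl2, hd⟩ hdi
    have hind12 : G.obsSeq i π1 = G.obsSeq i π2 := (hd i).1 hdi
    have hm1 : π1 ∈ G.InfoSet i π := ⟨h1, hobs.symm⟩
    have hm2 : π2 ∈ G.InfoSet i π := ⟨h2, (hobs.symm.trans hind12 : _)⟩
    have hj1 : G.Indist j π π1 := (hle hm1).2
    have hj2 : G.Indist j π π2 := (hle hm2).2
    exact (hd j).2 (hj1.symm.trans hj2)

/-- From the reachable state one can read off `infoLE π j i`, under dynamic HI. -/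
lemma autoSem_infoLE_right {G : GameGraph n V A B} (hG : G.DynamicHI) {i : Fin n} {π : List V}
    (h : G.IsHistory π) (j : Fin n) :
    (∀ x ∈ G.autoSem i (G.obsSeq i π), x.2.2 j = true → x.2.2 i = true) ↔ G.infoLE π j i := by
  classical
  constructor
  · intro hQ π'' hπ''
    obtain ⟨h'', hind⟩ := hπ''
    refine ⟨h'', ?_⟩
    have hlen : π.length = π''.length := length_eq_of_indist h h'' hind
    have hx : (π.getLastD G.init, π''.getLastD G.init,
        fun k => decide (G.obsSeq k π = G.obsSeq k π'')) ∈ G.autoSem i (G.obsSeq i π) :=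
      ⟨π, π'', h, h'', rfl, hlen, rfl, rfl, fun k => by simp⟩
    have := hQ _ hx (by simp; exact hind)
    simpa [GameGraph.Indist] using this
  · rintro hle x ⟨π1, π2, h1, h2, hobs, hlen, hl1, hl2, hd⟩ hdj
    have hindj : G.obsSeq j π1 = G.obsSeq j π2 := (hd j).1 hdj
    -- π1 is in the i-class of π, so infoLE transfers to π1
    have hle1 : G.infoLE π1 j i := (infoLE_right_congr hG h h1 hobs.symm).1 hle
    have hm2 : π2 ∈ G.InfoSet j π1 := ⟨h2, hindj⟩
    exact (hd i).2 (hle1 hm2).2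

end GameGraph

end Auto

/-- In a finite game graph with dynamic hierarchical information, for every
player `i`: (a) the rank signal is information-consistent for `i`; (b) it is implemented by a
Moore machine reading the observations of `i`; (c) for every player `j`, the relative-order
signal `⪯^i_j` is information-consistent for `i` and implemented by a Moore machine reading
the observations of `i`. -/
theorem statement8 {n : ℕ} {V : Type} {A B : Fin n → Type}
    [Fintype V] [∀ i, Fintype (A i)] [∀ i, Fintype (B i)]
    (G : GameGraph n V A B) (hG : G.DynamicHI) (i : Fin n) :
    (∀ π π', G.IsHistory π → G.IsHistory π' → G.Indist i π π' → G.rank i π = G.rank i π') ∧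
    (∃ mc : Moore (B i) ℕ, ∀ π, G.IsHistory π → mc.output (G.obsSeq i π) = G.rank i π) ∧
    (∀ j : Fin n,
      (∀ π π', G.IsHistory π → G.IsHistory π' → G.Indist i π π' →
        (G.infoLE π i j ↔ G.infoLE π' i j)) ∧
      (∃ mc : Moore (B i) Bool, ∀ π, G.IsHistory π →
        (mc.output (G.obsSeq i π) = true ↔ G.infoLE π i j))) := by
  classical
  have hrank : ∀ π π', G.IsHistory π → G.IsHistory π' → G.Indist i π π' →
      G.rank i π = G.rank i π' := by
    intro π π' h h' hi
    unfold GameGraph.rank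
    apply Nat.card_congr
    apply Equiv.subtypeEquivRight
    intro j
    rw [GameGraph.infoLE_left_congr h h' hi, GameGraph.infoLE_right_congr hG h h' hi]
  refine ⟨hrank, ?_, ?_⟩
  · refine ⟨⟨Set (GameGraph.AutoState n V), inferInstance, G.autoInit, G.autoDelta i,
      fun S => Nat.card {j : Fin n //
        ((∀ x ∈ S, x.2.2 j = true → x.2.2 i = true) ∧
          ¬ (∀ x ∈ S, x.2.2 i = true → x.2.2 j = true)) ∨
        (j < i ∧ (∀ x ∈ S, x.2.2 j = true → x.2.2 i = true) ∧
          (∀ x ∈ S, x.2.2 i = true → x.2.2 j = true))}⟩, ?_⟩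
    intro π hπ
    show Nat.card _ = _
    rw [show ((G.obsSeq i π).foldl (G.autoDelta i) G.autoInit) = G.autoSem i (G.obsSeq i π)
      from G.autoSem_foldl i _]
    unfold GameGraph.rank
    apply Nat.card_congr
    apply Equiv.subtypeEquivRight
    intro j
    rw [GameGraph.autoSem_infoLE_left hπ j, GameGraph.autoSem_infoLE_right hG hπ j]
  · intro j
    refine ⟨fun π π' h h' hi => GameGraph.infoLE_left_congr h h' hi, ?_⟩
    refine ⟨⟨Set (GameGraph.AutoState n V), inferInstance, G.autoInit, G.autoDelta i,
      fun S => decide (∀ x ∈ S, x.2.2 i = true → x.2.2 j = true)⟩, ?_⟩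
    intro π hπ
    show decide _ = true ↔ _
    rw [show ((G.obsSeq i π).foldl (G.autoDelta i) G.autoInit) = G.autoSem i (G.obsSeq i π)
      from G.autoSem_foldl i _]
    rw [decide_eq_true_eq]
    exact GameGraph.autoSem_infoLE_left hπ j
end
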